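/- arXiv:1810.02158 — 8 statements merged into one kernel-verified Lean document; each statement's English description precedes it below -/
import Mathlib

section
/- For every ζ > 0, L₀(ζ) = ((1+ζ)(7+ζ²)/(3π)) · E(2√ζ/(1+ζ)) − ((1+ζ)(1−ζ)²/(3π)) · K(2√ζ/(1+ζ)). -/
open Real

/-- `L₀(ζ) = (1/π) ∫₀^π √(1 + ζ² + 2ζ cos θ) (1 + ζ cos θ) dθ`. -/
noncomputable def L0 (ζ : ℝ) : ℝ :=
  (1 / π) * ∫ θ in (0:ℝ)..π, Real.sqrt (1 + ζ ^ 2 + 2 * ζ * Real.cos θ) * (1 + ζ * Real.cos θ)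

/-- The complete elliptic integral of the first kind. -/
noncomputable def ellK (k : ℝ) : ℝ :=
  ∫ θ in (0:ℝ)..(π / 2), (Real.sqrt (1 - k ^ 2 * Real.sin θ ^ 2))⁻¹

/-- The complete elliptic integral of the second kind. -/
noncomputable def ellE (k : ℝ) : ℝ :=
  ∫ θ in (0:ℝ)..(π / 2), Real.sqrt (1 - k ^ 2 * Real.sin θ ^ 2)

lemma w_pos {k : ℝ} (hk : k ^ 2 < 1) (u : ℝ) : 0 < 1 - k ^ 2 * sin u ^ 2 := by
  nlinarith [sin_sq_le_one u, sq_nonneg k, sq_nonneg (sin u)]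

lemma deriv_aux {k : ℝ} (hk : k ^ 2 < 1) (u : ℝ) :
    HasDerivAt (fun u => k ^ 2 * (sin u * cos u * Real.sqrt (1 - k ^ 2 * sin u ^ 2)))
      (3 * ((1 - k ^ 2 * sin u ^ 2) * Real.sqrt (1 - k ^ 2 * sin u ^ 2))
        + (2 * k ^ 2 - 4) * Real.sqrt (1 - k ^ 2 * sin u ^ 2)
        + (1 - k ^ 2) * (Real.sqrt (1 - k ^ 2 * sin u ^ 2))⁻¹) u := by
  have hw := w_pos hk u
  have hspos : 0 < Real.sqrt (1 - k ^ 2 * sin u ^ 2) := Real.sqrt_pos.2 hw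
  have h1 : HasDerivAt (fun u : ℝ => sin u * cos u) (cos u ^ 2 - sin u ^ 2) u := by
    have : HasDerivAt (fun u : ℝ => sin u * cos u) _ u := (hasDerivAt_sin u).mul (hasDerivAt_cos u)
    convert this using 1; ring
  have h2 : HasDerivAt (fun u : ℝ => 1 - k ^ 2 * sin u ^ 2)
      (-(k ^ 2 * (2 * sin u * cos u))) u := by
    have hs : HasDerivAt (fun u : ℝ => sin u ^ 2) (2 * sin u * cos u) u := by
      have : HasDerivAt (fun u : ℝ => sin u ^ 2) _ u := (hasDerivAt_sin u).pow 2
      convert this using 1; ring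
    have h := (hs.const_mul (k ^ 2)).const_sub 1
    convert h using 1
  have h3 := h2.sqrt hw.ne'
  have h4 : HasDerivAt (fun u => k ^ 2 * (sin u * cos u * Real.sqrt (1 - k ^ 2 * sin u ^ 2))) _ u :=
    (h1.mul h3).const_mul (k ^ 2)
  convert h4 using 1
  have hc : cos u ^ 2 = 1 - sin u ^ 2 := by nlinarith [sin_sq_add_cos_sq u]
  have h5 : Real.sqrt (1 - k ^ 2 * sin u ^ 2) * Real.sqrt (1 - k ^ 2 * sin u ^ 2)
      = 1 - k ^ 2 * sin u ^ 2 := Real.mul_self_sqrt hw.le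
  field_simp
  have h6 : Real.sqrt (1 - k ^ 2 * sin u ^ 2) ^ 3
      = (1 - k ^ 2 * sin u ^ 2) * Real.sqrt (1 - k ^ 2 * sin u ^ 2) := by
    rw [pow_succ, sq, h5]
  ring_nf
  rw [Real.sq_sqrt hw.le, hc]
  ring

lemma cont_sqrtw (k : ℝ) : Continuous fun u : ℝ => Real.sqrt (1 - k ^ 2 * sin u ^ 2) := by
  fun_prop

lemma I3_lt {k : ℝ} (hk : k ^ 2 < 1) :
    ∫ u in (0:ℝ)..(π / 2), (1 - k ^ 2 * sin u ^ 2) * Real.sqrt (1 - k ^ 2 * sin u ^ 2)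
      = ((4 - 2 * k ^ 2) * ellE k - (1 - k ^ 2) * ellK k) / 3 := by
  have c1 := cont_sqrtw k
  have c2 : Continuous fun u : ℝ => (1 - k ^ 2 * sin u ^ 2) * Real.sqrt (1 - k ^ 2 * sin u ^ 2) := by
    fun_prop
  have hne : ∀ u : ℝ, Real.sqrt (1 - k ^ 2 * sin u ^ 2) ≠ 0 :=
    fun u => (Real.sqrt_pos.2 (w_pos hk u)).ne'
  have c3 : Continuous fun u : ℝ => (Real.sqrt (1 - k ^ 2 * sin u ^ 2))⁻¹ := c1.inv₀ hne
  have i1 : IntervalIntegrable (fun u : ℝ => Real.sqrt (1 - k ^ 2 * sin u ^ 2))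
      MeasureTheory.volume 0 (π / 2) := c1.intervalIntegrable _ _
  have i2 : IntervalIntegrable
      (fun u : ℝ => (1 - k ^ 2 * sin u ^ 2) * Real.sqrt (1 - k ^ 2 * sin u ^ 2))
      MeasureTheory.volume 0 (π / 2) := c2.intervalIntegrable _ _
  have i3 : IntervalIntegrable (fun u : ℝ => (Real.sqrt (1 - k ^ 2 * sin u ^ 2))⁻¹)
      MeasureTheory.volume 0 (π / 2) := c3.intervalIntegrable _ _
  have hFTC := intervalIntegral.integral_eq_sub_of_hasDerivAt
    (f := fun u => k ^ 2 * (sin u * cos u * Real.sqrt (1 - k ^ 2 * sin u ^ 2)))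
    (f' := fun u => 3 * ((1 - k ^ 2 * sin u ^ 2) * Real.sqrt (1 - k ^ 2 * sin u ^ 2))
        + (2 * k ^ 2 - 4) * Real.sqrt (1 - k ^ 2 * sin u ^ 2)
        + (1 - k ^ 2) * (Real.sqrt (1 - k ^ 2 * sin u ^ 2))⁻¹)
    (a := 0) (b := π / 2) (fun u _ => deriv_aux hk u)
    (((i2.const_mul 3).add (i1.const_mul _)).add (i3.const_mul _))
  rw [intervalIntegral.integral_add ((i2.const_mul 3).add (i1.const_mul _)) (i3.const_mul _),
    intervalIntegral.integral_add (i2.const_mul 3) (i1.const_mul _),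
    intervalIntegral.integral_const_mul, intervalIntegral.integral_const_mul,
    intervalIntegral.integral_const_mul] at hFTC
  simp [Real.cos_pi_div_two, Real.sin_zero] at hFTC
  rw [ellE, ellK]
  linarith [hFTC]

lemma I3_eq {k : ℝ} (hk : k ^ 2 = 1) :
    ∫ u in (0:ℝ)..(π / 2), (1 - k ^ 2 * sin u ^ 2) * Real.sqrt (1 - k ^ 2 * sin u ^ 2)
      = ((4 - 2 * k ^ 2) * ellE k - (1 - k ^ 2) * ellK k) / 3 := by
  have heq : Set.EqOn (fun u : ℝ => (1 - k ^ 2 * sin u ^ 2) * Real.sqrt (1 - k ^ 2 * sin u ^ 2))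
      (fun u : ℝ => cos u ^ 3) (Set.uIcc 0 (π / 2)) := by
    intro u hu
    rw [Set.uIcc_of_le (by positivity)] at hu
    have hcos : 0 ≤ cos u := cos_nonneg_of_mem_Icc ⟨by linarith [hu.1, pi_pos], hu.2⟩
    have hc : 1 - k ^ 2 * sin u ^ 2 = cos u ^ 2 := by
      rw [hk]; nlinarith [sin_sq_add_cos_sq u]
    simp only [hc, Real.sqrt_sq hcos]
    ring
  have heqE : Set.EqOn (fun u : ℝ => Real.sqrt (1 - k ^ 2 * sin u ^ 2))
      (fun u : ℝ => cos u) (Set.uIcc 0 (π / 2)) := by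
    intro u hu
    rw [Set.uIcc_of_le (by positivity)] at hu
    have hcos : 0 ≤ cos u := cos_nonneg_of_mem_Icc ⟨by linarith [hu.1, pi_pos], hu.2⟩
    have hc : 1 - k ^ 2 * sin u ^ 2 = cos u ^ 2 := by
      rw [hk]; nlinarith [sin_sq_add_cos_sq u]
    simp only [hc, Real.sqrt_sq hcos]
  have hE : ellE k = 1 := by
    rw [ellE, intervalIntegral.integral_congr heqE]
    simp
  rw [intervalIntegral.integral_congr heq, hE, hk]
  simp
  norm_num

lemma I3 {k : ℝ} (hk : k ^ 2 ≤ 1) :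
    ∫ u in (0:ℝ)..(π / 2), (1 - k ^ 2 * sin u ^ 2) * Real.sqrt (1 - k ^ 2 * sin u ^ 2)
      = ((4 - 2 * k ^ 2) * ellE k - (1 - k ^ 2) * ellK k) / 3 := by
  rcases lt_or_eq_of_le hk with h | h
  · exact I3_lt h
  · exact I3_eq h

theorem stmt_3 (ζ : ℝ) (hζ : 0 < ζ) :
    L0 ζ = ((1 + ζ) * (7 + ζ ^ 2) / (3 * π)) * ellE (2 * Real.sqrt ζ / (1 + ζ))
      - ((1 + ζ) * (1 - ζ) ^ 2 / (3 * π)) * ellK (2 * Real.sqrt ζ / (1 + ζ)) := by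
  set k : ℝ := 2 * Real.sqrt ζ / (1 + ζ) with hkdef
  have h1ζ : (0:ℝ) < 1 + ζ := by linarith
  have hk2 : k ^ 2 * (1 + ζ) ^ 2 = 4 * ζ := by
    rw [hkdef, div_pow, mul_pow, Real.sq_sqrt hζ.le,
      div_mul_cancel₀ _ (by positivity : ((1:ℝ) + ζ) ^ 2 ≠ 0)]
    ring
  have hk1 : k ^ 2 ≤ 1 := by nlinarith [sq_nonneg (1 - ζ), sq_nonneg k]
  set f : ℝ → ℝ :=
    fun θ => Real.sqrt (1 + ζ ^ 2 + 2 * ζ * Real.cos θ) * (1 + ζ * Real.cos θ) with hfdef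
  have hsub : (∫ θ in (0:ℝ)..π, f θ) = 2 * ∫ u in (0:ℝ)..(π / 2), f (2 * u) := by
    rw [intervalIntegral.integral_comp_mul_left f two_ne_zero,
      show (2:ℝ) * (π / 2) = π by ring, show (2:ℝ) * 0 = 0 by ring]
    simp [smul_eq_mul]
  have hpt : ∀ u : ℝ, f (2 * u)
      = (1 + ζ) * (((1 + ζ) - (1 + ζ) ^ 2 / 2) * Real.sqrt (1 - k ^ 2 * sin u ^ 2)
        + ((1 + ζ) ^ 2 / 2) * ((1 - k ^ 2 * sin u ^ 2) * Real.sqrt (1 - k ^ 2 * sin u ^ 2))) := by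
    intro u
    have hcos : Real.cos (2 * u) = 1 - 2 * sin u ^ 2 := by
      rw [Real.cos_two_mul]; have := Real.sin_sq_add_cos_sq u; linarith
    have hw : 1 + ζ ^ 2 + 2 * ζ * Real.cos (2 * u) = (1 + ζ) ^ 2 * (1 - k ^ 2 * sin u ^ 2) := by
      rw [hcos]; linear_combination (sin u ^ 2) * hk2
    rw [hfdef]
    simp only
    rw [hw, Real.sqrt_mul (sq_nonneg _), Real.sqrt_sq h1ζ.le, hcos]
    have hlin : 1 + ζ * (1 - 2 * sin u ^ 2)
        = ((1 + ζ) - (1 + ζ) ^ 2 / 2) + ((1 + ζ) ^ 2 / 2) * (1 - k ^ 2 * sin u ^ 2) := by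
      linear_combination (sin u ^ 2 / 2) * hk2
    rw [hlin]; ring
  have c1 : Continuous fun u : ℝ => Real.sqrt (1 - k ^ 2 * sin u ^ 2) := by fun_prop
  have c2 : Continuous fun u : ℝ =>
      (1 - k ^ 2 * sin u ^ 2) * Real.sqrt (1 - k ^ 2 * sin u ^ 2) := by fun_prop
  have i1 : IntervalIntegrable (fun u : ℝ => Real.sqrt (1 - k ^ 2 * sin u ^ 2))
      MeasureTheory.volume 0 (π / 2) := c1.intervalIntegrable _ _
  have i2 : IntervalIntegrable
      (fun u : ℝ => (1 - k ^ 2 * sin u ^ 2) * Real.sqrt (1 - k ^ 2 * sin u ^ 2))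
      MeasureTheory.volume 0 (π / 2) := c2.intervalIntegrable _ _
  have hint : (∫ u in (0:ℝ)..(π / 2), f (2 * u))
      = (1 + ζ) * (((1 + ζ) - (1 + ζ) ^ 2 / 2) * ellE k
        + ((1 + ζ) ^ 2 / 2) * ((((4 - 2 * k ^ 2) * ellE k - (1 - k ^ 2) * ellK k) / 3))) := by
    rw [intervalIntegral.integral_congr (g := fun u =>
      (1 + ζ) * (((1 + ζ) - (1 + ζ) ^ 2 / 2) * Real.sqrt (1 - k ^ 2 * sin u ^ 2)
        + ((1 + ζ) ^ 2 / 2) * ((1 - k ^ 2 * sin u ^ 2) * Real.sqrt (1 - k ^ 2 * sin u ^ 2))))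
      (fun u _ => hpt u)]
    rw [intervalIntegral.integral_const_mul,
      intervalIntegral.integral_add (i1.const_mul _) (i2.const_mul _),
      intervalIntegral.integral_const_mul, intervalIntegral.integral_const_mul,
      I3 hk1]
    rfl
  clear_value k
  rw [L0, ← hfdef, hsub, hint]
  linear_combination ((1 + ζ) * (ellK k - 2 * ellE k) / (3 * π)) * hk2
end

section
/- For every ζ > 0 with ζ ≠ 1, the identity (ζ/π) · ∫₀^π √(1 + ζ² + 2ζ cos θ) · cos θ dθ = ((1+ζ²)/(6π)) · ∫₀^π √(1 + ζ² + 2ζ cos θ) dθ − ((1+ζ)²(1−ζ)²/(6π√(1+ζ²))) · ∫₀^π (1 + (2ζ/(1+ζ²)) cos θ)^{−1/2} dθ holds. -/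
open Real

theorem stmt_6 (ζ : ℝ) (hζ : 0 < ζ) (hζ1 : ζ ≠ 1) :
    (ζ / π) * ∫ θ in (0:ℝ)..π, Real.sqrt (1 + ζ ^ 2 + 2 * ζ * Real.cos θ) * Real.cos θ
      = ((1 + ζ ^ 2) / (6 * π)) * (∫ θ in (0:ℝ)..π, Real.sqrt (1 + ζ ^ 2 + 2 * ζ * Real.cos θ))
        - ((1 + ζ) ^ 2 * (1 - ζ) ^ 2 / (6 * π * Real.sqrt (1 + ζ ^ 2)))
            * ∫ θ in (0:ℝ)..π, (Real.sqrt (1 + (2 * ζ / (1 + ζ ^ 2)) * Real.cos θ))⁻¹ := by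
  have ha : (0:ℝ) < 1 + ζ ^ 2 := by positivity
  have hu : ∀ θ : ℝ, 0 < 1 + ζ ^ 2 + 2 * ζ * Real.cos θ := by
    intro θ
    have h1 : (1:ℝ) - ζ ≠ 0 := sub_ne_zero.mpr (Ne.symm hζ1)
    have h2 : 0 < (1 - ζ) ^ 2 := by positivity
    have h3 : 0 ≤ ζ * (1 + Real.cos θ) := mul_nonneg hζ.le (by linarith [Real.neg_one_le_cos θ])
    nlinarith
  -- continuity facts
  have hcontu : Continuous fun θ : ℝ => 1 + ζ ^ 2 + 2 * ζ * Real.cos θ := by continuity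
  have hconts : Continuous fun θ : ℝ => Real.sqrt (1 + ζ ^ 2 + 2 * ζ * Real.cos θ) :=
    hcontu.sqrt
  have hsne : ∀ θ : ℝ, Real.sqrt (1 + ζ ^ 2 + 2 * ζ * Real.cos θ) ≠ 0 := fun θ =>
    ne_of_gt (Real.sqrt_pos.mpr (hu θ))
  have hcontinv : Continuous fun θ : ℝ => (Real.sqrt (1 + ζ ^ 2 + 2 * ζ * Real.cos θ))⁻¹ :=
    hconts.inv₀ hsne
  have hcontsc : Continuous fun θ : ℝ =>
      Real.sqrt (1 + ζ ^ 2 + 2 * ζ * Real.cos θ) * Real.cos θ := hconts.mul Real.continuous_cos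
  -- derivative
  have hderiv : ∀ θ : ℝ, HasDerivAt (fun t => Real.sin t * Real.sqrt (1 + ζ^2 + 2*ζ*Real.cos t))
      ((3/2) * (Real.sqrt (1+ζ^2+2*ζ*Real.cos θ) * Real.cos θ)
       - ((1+ζ^2)/(4*ζ)) * Real.sqrt (1+ζ^2+2*ζ*Real.cos θ)
       + ((1-ζ^2)^2/(4*ζ)) * (Real.sqrt (1+ζ^2+2*ζ*Real.cos θ))⁻¹) θ := by
    intro θ
    have hu' : HasDerivAt (fun t : ℝ => 1 + ζ^2 + 2*ζ*Real.cos t) (2*ζ*(-Real.sin θ)) θ := by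
      simpa using ((Real.hasDerivAt_cos θ).const_mul (2*ζ)).const_add (1+ζ^2)
    have hs := hu'.sqrt (ne_of_gt (hu θ))
    have h := (Real.hasDerivAt_sin θ).mul hs
    refine h.congr_deriv (Eq.symm ?_)
    have hspos := Real.sqrt_pos.mpr (hu θ)
    have hsq := Real.sq_sqrt (hu θ).le
    set s := Real.sqrt (1+ζ^2+2*ζ*Real.cos θ) with hsdef
    have hs0 : s ≠ 0 := ne_of_gt hspos
    have hsin : Real.sin θ ^ 2 = 1 - Real.cos θ ^ 2 := by nlinarith [Real.sin_sq_add_cos_sq θ]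
    field_simp
    linear_combination (4*ζ*Real.cos θ - 2*(1+ζ^2)) * hsq + 8*ζ^2 * hsin
  -- integrability of the derivative
  have hcontg : Continuous fun θ : ℝ =>
      (3/2) * (Real.sqrt (1+ζ^2+2*ζ*Real.cos θ) * Real.cos θ)
       - ((1+ζ^2)/(4*ζ)) * Real.sqrt (1+ζ^2+2*ζ*Real.cos θ)
       + ((1-ζ^2)^2/(4*ζ)) * (Real.sqrt (1+ζ^2+2*ζ*Real.cos θ))⁻¹ :=
    ((continuous_const.mul hcontsc).sub (continuous_const.mul hconts)).add (continuous_const.mul hcontinv)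
  have hFTC := intervalIntegral.integral_eq_sub_of_hasDerivAt
      (fun θ _ => hderiv θ) (hcontg.intervalIntegrable (μ := MeasureTheory.volume) 0 π)
  rw [Real.sin_pi, Real.sin_zero, zero_mul, zero_mul, sub_zero] at hFTC
  -- split the integral
  have hi1 := hcontsc.intervalIntegrable (μ := MeasureTheory.volume) (0:ℝ) π
  have hi2 := hconts.intervalIntegrable (μ := MeasureTheory.volume) (0:ℝ) π
  have hi3 := hcontinv.intervalIntegrable (μ := MeasureTheory.volume) (0:ℝ) π
  rw [intervalIntegral.integral_add (((hi1.const_mul _).sub (hi2.const_mul _))) (hi3.const_mul _),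
    intervalIntegral.integral_sub (hi1.const_mul _) (hi2.const_mul _),
    intervalIntegral.integral_const_mul, intervalIntegral.integral_const_mul,
    intervalIntegral.integral_const_mul] at hFTC
  -- rewrite the third integral of the statement
  have h3 : (∫ θ in (0:ℝ)..π, (Real.sqrt (1 + (2 * ζ / (1 + ζ ^ 2)) * Real.cos θ))⁻¹)
      = Real.sqrt (1+ζ^2) * ∫ θ in (0:ℝ)..π, (Real.sqrt (1+ζ^2+2*ζ*Real.cos θ))⁻¹ := by
    rw [← intervalIntegral.integral_const_mul]
    apply intervalIntegral.integral_congr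
    intro θ _
    have he : 1 + 2 * ζ / (1 + ζ ^ 2) * Real.cos θ
        = (1 + ζ ^ 2 + 2 * ζ * Real.cos θ) / (1 + ζ ^ 2) := by
      field_simp
    show (Real.sqrt (1 + 2 * ζ / (1 + ζ ^ 2) * Real.cos θ))⁻¹
        = Real.sqrt (1 + ζ ^ 2) * (Real.sqrt (1 + ζ ^ 2 + 2 * ζ * Real.cos θ))⁻¹
    rw [he, Real.sqrt_div (hu θ).le, inv_div, div_eq_mul_inv]
  rw [h3]
  set I1 := ∫ θ in (0:ℝ)..π, Real.sqrt (1 + ζ ^ 2 + 2 * ζ * Real.cos θ) * Real.cos θ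
  set I2 := ∫ θ in (0:ℝ)..π, Real.sqrt (1 + ζ ^ 2 + 2 * ζ * Real.cos θ)
  set I3 := ∫ θ in (0:ℝ)..π, (Real.sqrt (1 + ζ ^ 2 + 2 * ζ * Real.cos θ))⁻¹
  have hπ : (π:ℝ) ≠ 0 := Real.pi_ne_zero
  have hsa : Real.sqrt (1 + ζ ^ 2) ≠ 0 := ne_of_gt (Real.sqrt_pos.mpr ha)
  have hζ' : ζ ≠ 0 := ne_of_gt hζ
  field_simp at hFTC
  have h8 : (8 * ζ : ℝ) ≠ 0 := by positivity
  have hmain : 6 * ζ * I1 = (1 + ζ ^ 2) * I2 - (1 - ζ ^ 2) ^ 2 * I3 := by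
    apply mul_left_cancel₀ h8
    linear_combination (4*ζ) * hFTC
  field_simp
  linear_combination hmain
end

section
/- For every ζ > 0 with ζ ≠ 1, the function L₀ is differentiable at ζ and twice differentiable at ζ, with L₀'(ζ) = ((ζ+1)(ζ²+1)/(πζ)) · E(2√ζ/(1+ζ)) − ((ζ+1)(ζ−1)²/(πζ)) · K(2√ζ/(1+ζ)) and L₀''(ζ) = ((ζ+1)(2ζ²−1)/(πζ²)) · E(2√ζ/(1+ζ)) − ((ζ−1)(2ζ²+1)/(πζ²)) · K(2√ζ/(1+ζ)). -/
open Real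

open MeasureTheory Metric intervalIntegral
open scoped Interval Topology

namespace Stmt8

noncomputable def Rf (x θ : ℝ) : ℝ := 1 + x ^ 2 + 2 * x * Real.cos θ
noncomputable def rt (x θ : ℝ) : ℝ := Real.sqrt (Rf x θ)
noncomputable def F0 (x θ : ℝ) : ℝ := rt x θ * (1 + x * Real.cos θ)
noncomputable def F1 (x θ : ℝ) : ℝ :=
  ((x + Real.cos θ) * (1 + x * Real.cos θ)) / rt x θ + Real.cos θ * rt x θ
noncomputable def F2 (x θ : ℝ) : ℝ :=
  (1 + 2 * x * Real.cos θ + Real.cos θ ^ 2) / rt x θ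
    - ((x + Real.cos θ) ^ 2 * (1 + x * Real.cos θ)) / (rt x θ) ^ 3
    + (Real.cos θ * (x + Real.cos θ)) / rt x θ

lemma Rf_pos {x : ℝ} (hx : 0 < x) (hx1 : x ≠ 1) (θ : ℝ) : 0 < Rf x θ := by
  have h1 : -1 ≤ Real.cos θ := Real.neg_one_le_cos θ
  have h2 : (0:ℝ) < (x - 1) ^ 2 := by
    have : x - 1 ≠ 0 := sub_ne_zero.mpr hx1
    positivity
  unfold Rf; nlinarith

lemma rt_pos {x : ℝ} (hx : 0 < x) (hx1 : x ≠ 1) (θ : ℝ) : 0 < rt x θ :=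
  Real.sqrt_pos.mpr (Rf_pos hx hx1 θ)

lemma rt_sq {x : ℝ} (hx : 0 < x) (hx1 : x ≠ 1) (θ : ℝ) : rt x θ ^ 2 = Rf x θ :=
  Real.sq_sqrt (Rf_pos hx hx1 θ).le

lemma hasDerivAt_rt_x {x : ℝ} (hx : 0 < x) (hx1 : x ≠ 1) (θ : ℝ) :
    HasDerivAt (fun y => rt y θ) ((x + Real.cos θ) / rt x θ) x := by
  have hR : HasDerivAt (fun y => Rf y θ) (2 * x + 2 * Real.cos θ) x := by
    unfold Rf
    have h := ((hasDerivAt_pow 2 x).const_add 1).add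
      (((hasDerivAt_id x).const_mul 2).mul_const (Real.cos θ))
    refine h.congr_deriv ?_
    push_cast; ring
  have h := hR.sqrt (Rf_pos hx hx1 θ).ne'
  refine h.congr_deriv ?_
  have hrt := (rt_pos hx hx1 θ).ne'
  unfold rt at *
  field_simp

lemma hasDerivAt_F0 {x : ℝ} (hx : 0 < x) (hx1 : x ≠ 1) (θ : ℝ) :
    HasDerivAt (fun y => F0 y θ) (F1 x θ) x := by
  have h2 : HasDerivAt (fun y : ℝ => 1 + y * Real.cos θ) (Real.cos θ) x := by
    simpa using ((hasDerivAt_id x).mul_const (Real.cos θ)).const_add 1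
  have h := (hasDerivAt_rt_x hx hx1 θ).mul h2
  have hrt := (rt_pos hx hx1 θ).ne'
  refine h.congr_deriv ?_
  unfold F1
  ring

lemma hasDerivAt_F1 {x : ℝ} (hx : 0 < x) (hx1 : x ≠ 1) (θ : ℝ) :
    HasDerivAt (fun y => F1 y θ) (F2 x θ) x := by
  have hrt := (rt_pos hx hx1 θ).ne'
  have hnum := ((hasDerivAt_id x).add_const (Real.cos θ)).mul
      (((hasDerivAt_id x).mul_const (Real.cos θ)).const_add 1)
  have h1 := hnum.div (hasDerivAt_rt_x hx hx1 θ) hrt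
  have h2 := (hasDerivAt_rt_x hx hx1 θ).const_mul (Real.cos θ)
  have h := h1.add h2
  refine h.congr_deriv ?_
  simp only [id, Pi.mul_apply]
  unfold F2
  field_simp
  ring

lemma key1 (x c r : ℝ) (hx : x ≠ 0) (hr : 0 < r) (hr2 : r ^ 2 = 1 + x ^ 2 + 2 * x * c) :
    c * r - x * (1 - c ^ 2) / r
      = (((x + c) * (1 + x * c)) / r + c * r)
        - ((1 + x ^ 2) / (2 * x) * r + (-(1 - x ^ 2) ^ 2 / (2 * x)) * r⁻¹) := by
  have hrne := hr.ne'
  field_simp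
  linear_combination (1 + x ^ 2) * hr2

lemma hasDerivAt_rt_theta {x : ℝ} (hx : 0 < x) (hx1 : x ≠ 1) (θ : ℝ) :
    HasDerivAt (fun t => rt x t) (-(x * Real.sin θ) / rt x θ) θ := by
  have hR : HasDerivAt (fun t => Rf x t) (2 * x * -Real.sin θ) θ := by
    unfold Rf
    exact ((Real.hasDerivAt_cos θ).const_mul (2 * x)).const_add (1 + x ^ 2)
  have h := hR.sqrt (Rf_pos hx hx1 θ).ne'
  refine h.congr_deriv ?_
  have hrt := (rt_pos hx hx1 θ).ne'
  unfold rt at *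
  field_simp

lemma hasDerivAt_G1 {x : ℝ} (hx : 0 < x) (hx1 : x ≠ 1) (θ : ℝ) :
    HasDerivAt (fun t => Real.sin t * rt x t)
      (F1 x θ - ((1 + x ^ 2) / (2 * x) * rt x θ + (-(1 - x ^ 2) ^ 2 / (2 * x)) * (rt x θ)⁻¹)) θ := by
  have h := (Real.hasDerivAt_sin θ).mul (hasDerivAt_rt_theta hx hx1 θ)
  refine h.congr_deriv (Eq.symm ?_)
  have hs : Real.sin θ ^ 2 = 1 - Real.cos θ ^ 2 := by
    nlinarith [Real.sin_sq_add_cos_sq θ]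
  have k := key1 x (Real.cos θ) (rt x θ) hx.ne' (rt_pos hx hx1 θ)
    (by rw [rt_sq hx hx1 θ]; rfl)
  unfold F1 at *
  linear_combination (-1) * k + (x / rt x θ) * hs

lemma hasDerivAt_G2 {x : ℝ} (hx : 0 < x) (hx1 : x ≠ 1) (θ : ℝ) :
    HasDerivAt (fun t => (1 / (2 * x)) * (Real.sin t * rt x t)
        - ((x ^ 2 - 1) / (2 * x)) * (Real.sin t * (rt x t)⁻¹))
      (F2 x θ - ((2 * x ^ 2 - 1) / (2 * x ^ 2) * rt x θ
          + (-(x ^ 2 - 1) * (2 * x ^ 2 + 1) / (2 * x ^ 2)) * (rt x θ)⁻¹)) θ := by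
  have h1 := (Real.hasDerivAt_sin θ).mul (hasDerivAt_rt_theta hx hx1 θ)
  have hinv := (hasDerivAt_rt_theta hx hx1 θ).inv (rt_pos hx hx1 θ).ne'
  have h2 := (Real.hasDerivAt_sin θ).mul hinv
  have h := (h1.const_mul (1 / (2 * x))).sub (h2.const_mul ((x ^ 2 - 1) / (2 * x)))
  refine h.congr_deriv (Eq.symm ?_)
  simp only [Pi.inv_apply]
  have hs : Real.sin θ ^ 2 = 1 - Real.cos θ ^ 2 := by
    nlinarith [Real.sin_sq_add_cos_sq θ]
  have hr2 : rt x θ ^ 2 = 1 + x ^ 2 + 2 * x * Real.cos θ := by rw [rt_sq hx hx1 θ]; rfl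
  have hrne := (rt_pos hx hx1 θ).ne'
  unfold F2
  field_simp
  linear_combination (x ^ 2 * (1 + x * Real.cos θ) ^ 2 + x ^ 2 * Real.cos θ ^ 2 * (1 - x ^ 2) - (2 * x ^ 2 - 1 + x * Real.cos θ) * rt x θ ^ 2) * hr2 + x ^ 2 * (rt x θ ^ 2 + x ^ 2 - 1) * hs

lemma cont_rt (x : ℝ) : Continuous fun θ => rt x θ := by
  unfold rt Rf; fun_prop

lemma cont_F0 (x : ℝ) : Continuous fun θ => F0 x θ := by
  unfold F0 rt Rf; fun_prop

lemma cont_rt_inv {x : ℝ} (hx : 0 < x) (hx1 : x ≠ 1) :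
    Continuous fun θ => (rt x θ)⁻¹ :=
  (cont_rt x).inv₀ fun θ => (rt_pos hx hx1 θ).ne'

lemma cont_F1 {x : ℝ} (hx : 0 < x) (hx1 : x ≠ 1) : Continuous fun θ => F1 x θ := by
  unfold F1
  exact (Continuous.div (by fun_prop) (cont_rt x)
    (fun θ => (rt_pos hx hx1 θ).ne')).add (continuous_cos.mul (cont_rt x))

lemma cont_F2 {x : ℝ} (hx : 0 < x) (hx1 : x ≠ 1) : Continuous fun θ => F2 x θ := by
  unfold F2
  have h3 : ∀ θ, (rt x θ) ^ 3 ≠ 0 := fun θ => pow_ne_zero 3 (rt_pos hx hx1 θ).ne'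
  exact ((Continuous.div (by fun_prop) (cont_rt x) (fun θ => (rt_pos hx hx1 θ).ne')).sub
      (Continuous.div (by fun_prop) ((cont_rt x).pow 3) h3)).add
    (Continuous.div (by fun_prop) (cont_rt x) (fun θ => (rt_pos hx hx1 θ).ne'))

lemma eval_aux {x A B : ℝ} (hx : 0 < x) (hx1 : x ≠ 1) {F : ℝ → ℝ}
    (hF : Continuous F) {G : ℝ → ℝ}
    (hG : ∀ θ, HasDerivAt G (F θ - (A * rt x θ + B * (rt x θ)⁻¹)) θ)
    (hG0 : G 0 = 0) (hGπ : G π = 0) :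
    ∫ θ in (0:ℝ)..π, F θ
      = A * (∫ θ in (0:ℝ)..π, rt x θ) + B * ∫ θ in (0:ℝ)..π, (rt x θ)⁻¹ := by
  have hc1 : Continuous fun θ => A * rt x θ + B * (rt x θ)⁻¹ :=
    (continuous_const.mul (cont_rt x)).add (continuous_const.mul (cont_rt_inv hx hx1))
  have hint1 : IntervalIntegrable (fun θ => F θ - (A * rt x θ + B * (rt x θ)⁻¹))
      volume 0 π := (hF.sub hc1).intervalIntegrable 0 π
  have hsplit : (fun θ => F θ)
      = fun θ => (F θ - (A * rt x θ + B * (rt x θ)⁻¹)) + (A * rt x θ + B * (rt x θ)⁻¹) := by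
    funext θ; ring
  calc ∫ θ in (0:ℝ)..π, F θ
      = ∫ θ in (0:ℝ)..π,
          ((F θ - (A * rt x θ + B * (rt x θ)⁻¹)) + (A * rt x θ + B * (rt x θ)⁻¹)) := by
        rw [← hsplit]
    _ = (∫ θ in (0:ℝ)..π, (F θ - (A * rt x θ + B * (rt x θ)⁻¹)))
          + ∫ θ in (0:ℝ)..π, (A * rt x θ + B * (rt x θ)⁻¹) := by
        rw [intervalIntegral.integral_add hint1 (hc1.intervalIntegrable 0 π)]
    _ = (G π - G 0) + ∫ θ in (0:ℝ)..π, (A * rt x θ + B * (rt x θ)⁻¹) := by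
        rw [intervalIntegral.integral_eq_sub_of_hasDerivAt (fun θ _ => hG θ) hint1]
    _ = A * (∫ θ in (0:ℝ)..π, rt x θ) + B * ∫ θ in (0:ℝ)..π, (rt x θ)⁻¹ := by
        rw [hG0, hGπ,
          intervalIntegral.integral_add (f := fun θ => A * rt x θ) (g := fun θ => B * (rt x θ)⁻¹)
            ((continuous_const.mul (cont_rt x)).intervalIntegrable 0 π)
            ((continuous_const.mul (cont_rt_inv hx hx1)).intervalIntegrable 0 π),
          intervalIntegral.integral_const_mul, intervalIntegral.integral_const_mul]
        ring

lemma eval1 {x : ℝ} (hx : 0 < x) (hx1 : x ≠ 1) :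
    ∫ θ in (0:ℝ)..π, F1 x θ
      = (1 + x ^ 2) / (2 * x) * (∫ θ in (0:ℝ)..π, rt x θ)
        + (-(1 - x ^ 2) ^ 2 / (2 * x)) * ∫ θ in (0:ℝ)..π, (rt x θ)⁻¹ :=
  eval_aux hx hx1 (cont_F1 hx hx1) (fun θ => hasDerivAt_G1 hx hx1 θ)
    (by simp) (by simp)

lemma eval2 {x : ℝ} (hx : 0 < x) (hx1 : x ≠ 1) :
    ∫ θ in (0:ℝ)..π, F2 x θ
      = (2 * x ^ 2 - 1) / (2 * x ^ 2) * (∫ θ in (0:ℝ)..π, rt x θ)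
        + (-(x ^ 2 - 1) * (2 * x ^ 2 + 1) / (2 * x ^ 2)) * ∫ θ in (0:ℝ)..π, (rt x θ)⁻¹ :=
  eval_aux hx hx1 (cont_F2 hx hx1) (fun θ => hasDerivAt_G2 hx hx1 θ)
    (by simp) (by simp)

lemma rt_double {x : ℝ} (hx : 0 < x) (φ : ℝ) :
    rt x (2 * φ) = (1 + x) * Real.sqrt (1 - (2 * Real.sqrt x / (1 + x)) ^ 2 * Real.sin φ ^ 2) := by
  have h1x : (0:ℝ) < 1 + x := by linarith
  have hsx : Real.sqrt x ^ 2 = x := Real.sq_sqrt hx.le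
  have hcos : Real.cos (2 * φ) = 2 * Real.cos φ ^ 2 - 1 := Real.cos_two_mul φ
  have hs : Real.sin φ ^ 2 = 1 - Real.cos φ ^ 2 := by
    nlinarith [Real.sin_sq_add_cos_sq φ]
  have key : Rf x (2 * φ)
      = (1 + x) ^ 2 * (1 - (2 * Real.sqrt x / (1 + x)) ^ 2 * Real.sin φ ^ 2) := by
    unfold Rf
    rw [hcos, hs]
    field_simp
    ring_nf
    nlinarith [hsx]
  unfold rt
  rw [key, Real.sqrt_mul (sq_nonneg _), Real.sqrt_sq h1x.le]

lemma evalJ1 {x : ℝ} (hx : 0 < x) :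
    ∫ θ in (0:ℝ)..π, rt x θ = 2 * (1 + x) * ellE (2 * Real.sqrt x / (1 + x)) := by
  have h := intervalIntegral.integral_comp_mul_left (a := (0:ℝ)) (b := π/2)
    (fun θ => rt x θ) (two_ne_zero (α := ℝ))
  have h2 : (2:ℝ) * (π / 2) = π := by ring
  rw [h2, mul_zero, smul_eq_mul] at h
  have h3 : (∫ φ in (0:ℝ)..(π/2), rt x (2 * φ))
      = (1 + x) * ellE (2 * Real.sqrt x / (1 + x)) := by
    have heq : (fun φ => rt x (2 * φ))
        = fun φ => (1 + x) * Real.sqrt (1 - (2 * Real.sqrt x / (1 + x)) ^ 2 * Real.sin φ ^ 2) :=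
      funext fun φ => rt_double hx φ
    rw [heq, intervalIntegral.integral_const_mul]
    rfl
  have h4 : (∫ θ in (0:ℝ)..π, rt x θ) = 2 * ∫ φ in (0:ℝ)..(π/2), rt x (2 * φ) := by
    rw [h]; ring
  rw [h4, h3]; ring

lemma evalJ2 {x : ℝ} (hx : 0 < x) :
    ∫ θ in (0:ℝ)..π, (rt x θ)⁻¹ = 2 * (1 + x)⁻¹ * ellK (2 * Real.sqrt x / (1 + x)) := by
  have h := intervalIntegral.integral_comp_mul_left (a := (0:ℝ)) (b := π/2)
    (fun θ => (rt x θ)⁻¹) (two_ne_zero (α := ℝ))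
  have h2 : (2:ℝ) * (π / 2) = π := by ring
  rw [h2, mul_zero, smul_eq_mul] at h
  have h3 : (∫ φ in (0:ℝ)..(π/2), (rt x (2 * φ))⁻¹)
      = (1 + x)⁻¹ * ellK (2 * Real.sqrt x / (1 + x)) := by
    have heq : (fun φ => (rt x (2 * φ))⁻¹)
        = fun φ => (1 + x)⁻¹
            * (Real.sqrt (1 - (2 * Real.sqrt x / (1 + x)) ^ 2 * Real.sin φ ^ 2))⁻¹ := by
      funext φ
      rw [rt_double hx φ, mul_inv]
    rw [heq, intervalIntegral.integral_const_mul]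
    rfl
  have h4 : (∫ θ in (0:ℝ)..π, (rt x θ)⁻¹) = 2 * ∫ φ in (0:ℝ)..(π/2), (rt x (2 * φ))⁻¹ := by
    rw [h]; ring
  rw [h4, h3]; ring

lemma cont_rt2 : Continuous fun p : ℝ × ℝ => rt p.1 p.2 := by
  unfold rt Rf; fun_prop

lemma contOn_F1' : ContinuousOn (fun p : ℝ × ℝ => F1 p.1 p.2)
    {p : ℝ × ℝ | 0 < p.1 ∧ p.1 ≠ 1} := by
  unfold F1
  exact (ContinuousOn.div (Continuous.continuousOn (by fun_prop)) cont_rt2.continuousOn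
      (fun p hp => (rt_pos hp.1 hp.2 p.2).ne')).add
    (((Real.continuous_cos.comp continuous_snd).mul cont_rt2).continuousOn)

lemma contOn_F2' : ContinuousOn (fun p : ℝ × ℝ => F2 p.1 p.2)
    {p : ℝ × ℝ | 0 < p.1 ∧ p.1 ≠ 1} := by
  unfold F2
  exact ((ContinuousOn.div (Continuous.continuousOn (by fun_prop)) cont_rt2.continuousOn
      (fun p hp => (rt_pos hp.1 hp.2 p.2).ne')).sub
    (ContinuousOn.div (Continuous.continuousOn (by fun_prop)) (cont_rt2.pow 3).continuousOn
      (fun p hp => pow_ne_zero 3 (rt_pos hp.1 hp.2 p.2).ne'))).add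
    (ContinuousOn.div (Continuous.continuousOn (by fun_prop)) cont_rt2.continuousOn
      (fun p hp => (rt_pos hp.1 hp.2 p.2).ne'))

lemma exists_bound {x₀ ε : ℝ}
    (hsub : ∀ y ∈ closedBall x₀ ε, 0 < y ∧ y ≠ 1) (Fc : ℝ → ℝ → ℝ)
    (hc : ContinuousOn (fun p : ℝ × ℝ => Fc p.1 p.2) {p : ℝ × ℝ | 0 < p.1 ∧ p.1 ≠ 1}) :
    ∃ C, ∀ y ∈ closedBall x₀ ε, ∀ θ ∈ Set.uIcc (0:ℝ) π, ‖Fc y θ‖ ≤ C := by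
  have hK : IsCompact (closedBall x₀ ε ×ˢ Set.uIcc (0:ℝ) π) :=
    (isCompact_closedBall _ _).prod isCompact_uIcc
  have hKsub : closedBall x₀ ε ×ˢ Set.uIcc (0:ℝ) π ⊆ {p : ℝ × ℝ | 0 < p.1 ∧ p.1 ≠ 1} :=
    fun p hp => hsub p.1 hp.1
  obtain ⟨C, hC⟩ := hK.exists_bound_of_continuousOn (hc.mono hKsub)
  exact ⟨C, fun y hy θ hθ => hC (y, θ) ⟨hy, hθ⟩⟩

lemma ball_prop {x₀ : ℝ} (h0 : 0 < x₀) (h1 : x₀ ≠ 1) :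
    ∀ y ∈ closedBall x₀ (min x₀ |x₀ - 1| / 2), 0 < y ∧ y ≠ 1 := by
  intro y hy
  rw [Metric.mem_closedBall, Real.dist_eq] at hy
  have h2 := abs_le.mp hy
  have hm1 : min x₀ |x₀ - 1| / 2 ≤ x₀ / 2 := by
    have := min_le_left x₀ |x₀ - 1|; linarith
  have hm2 : min x₀ |x₀ - 1| / 2 ≤ |x₀ - 1| / 2 := by
    have := min_le_right x₀ |x₀ - 1|; linarith
  have habs : 0 < |x₀ - 1| := abs_pos.mpr (sub_ne_zero.mpr h1)
  constructor
  · linarith [h2.1]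
  · intro he
    subst he
    rw [abs_sub_comm] at hy
    linarith [h2.2, abs_le.mp hy]

lemma eps_pos {x₀ : ℝ} (h0 : 0 < x₀) (h1 : x₀ ≠ 1) : 0 < min x₀ |x₀ - 1| / 2 := by
  have habs : 0 < |x₀ - 1| := abs_pos.mpr (sub_ne_zero.mpr h1)
  have := lt_min h0 habs
  linarith

lemma hasDerivAt_integral_param {x₀ : ℝ} (h0 : 0 < x₀) (h1 : x₀ ≠ 1)
    (F F' : ℝ → ℝ → ℝ)
    (hDer : ∀ x θ, 0 < x → x ≠ 1 → HasDerivAt (fun y => F y θ) (F' x θ) x)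
    (hcontF : ∀ x, 0 < x → x ≠ 1 → Continuous fun θ => F x θ)
    (hcontF' : Continuous fun θ => F' x₀ θ)
    (hcF' : ContinuousOn (fun p : ℝ × ℝ => F' p.1 p.2) {p : ℝ × ℝ | 0 < p.1 ∧ p.1 ≠ 1}) :
    HasDerivAt (fun x => ∫ θ in (0:ℝ)..π, F x θ) (∫ θ in (0:ℝ)..π, F' x₀ θ) x₀ := by
  have hε := eps_pos h0 h1
  have hball := ball_prop h0 h1
  obtain ⟨C, hC⟩ := exists_bound hball F' hcF'
  refine (intervalIntegral.hasDerivAt_integral_of_dominated_loc_of_deriv_le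
    (bound := fun _ => C) (Metric.ball_mem_nhds x₀ hε) ?_ ?_ ?_ ?_ ?_ ?_).2
  · filter_upwards [Metric.ball_mem_nhds x₀ hε] with x hx
    have h := hball x (ball_subset_closedBall hx)
    exact ((hcontF x h.1 h.2)).aestronglyMeasurable
  · exact (hcontF x₀ h0 h1).intervalIntegrable 0 π
  · exact hcontF'.aestronglyMeasurable
  · exact Filter.Eventually.of_forall fun θ hθ x hx =>
      hC x (ball_subset_closedBall hx) θ (Set.uIoc_subset_uIcc hθ)
  · exact intervalIntegrable_const
  · refine Filter.Eventually.of_forall fun θ hθ x hx => ?_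
    have h := hball x (ball_subset_closedBall hx)
    exact hDer x θ h.1 h.2

noncomputable def g1 : ℝ → ℝ := fun x => (1 / π) * ∫ θ in (0:ℝ)..π, F1 x θ

lemma L0_hasDerivAt {x : ℝ} (h0 : 0 < x) (h1 : x ≠ 1) : HasDerivAt L0 (g1 x) x := by
  have h := (hasDerivAt_integral_param h0 h1 F0 F1
      (fun x θ a b => hasDerivAt_F0 a b θ)
      (fun x _ _ => cont_F0 x)
      (cont_F1 h0 h1) contOn_F1').const_mul (1 / π)
  exact h

lemma hS_open : IsOpen {x : ℝ | 0 < x ∧ x ≠ 1} := by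
  have : {x : ℝ | 0 < x ∧ x ≠ 1} = Set.Ioi 0 ∩ {(1:ℝ)}ᶜ := by
    ext x; simp [Set.mem_Ioi]
  rw [this]
  exact isOpen_Ioi.inter isOpen_compl_singleton

end Stmt8

open Stmt8 in
theorem stmt_8 (ζ : ℝ) (hζ : 0 < ζ) (hζ1 : ζ ≠ 1) :
    HasDerivAt L0
        (((ζ + 1) * (ζ ^ 2 + 1) / (π * ζ)) * ellE (2 * Real.sqrt ζ / (1 + ζ))
          - ((ζ + 1) * (ζ - 1) ^ 2 / (π * ζ)) * ellK (2 * Real.sqrt ζ / (1 + ζ))) ζ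
      ∧ HasDerivAt (deriv L0)
        (((ζ + 1) * (2 * ζ ^ 2 - 1) / (π * ζ ^ 2)) * ellE (2 * Real.sqrt ζ / (1 + ζ))
          - ((ζ - 1) * (2 * ζ ^ 2 + 1) / (π * ζ ^ 2)) * ellK (2 * Real.sqrt ζ / (1 + ζ))) ζ := by
  have hπ : (π : ℝ) ≠ 0 := Real.pi_ne_zero
  have h1ζ : (1 : ℝ) + ζ ≠ 0 := by positivity
  have hζ0 : ζ ≠ 0 := hζ.ne'
  constructor
  · have h := L0_hasDerivAt hζ hζ1
    have he : g1 ζ = ((ζ + 1) * (ζ ^ 2 + 1) / (π * ζ)) * ellE (2 * Real.sqrt ζ / (1 + ζ))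
        - ((ζ + 1) * (ζ - 1) ^ 2 / (π * ζ)) * ellK (2 * Real.sqrt ζ / (1 + ζ)) := by
      unfold g1
      rw [eval1 hζ hζ1, evalJ1 hζ, evalJ2 hζ]
      field_simp
      ring
    rwa [he] at h
  · have h2 := (hasDerivAt_integral_param hζ hζ1 F1 F2
      (fun x θ a b => hasDerivAt_F1 a b θ)
      (fun x a b => cont_F1 a b)
      (cont_F2 hζ hζ1) contOn_F2').const_mul (1 / π)
    have heq : deriv L0 =ᶠ[𝓝 ζ] g1 := by
      filter_upwards [hS_open.mem_nhds ⟨hζ, hζ1⟩] with x hx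
      exact (L0_hasDerivAt hx.1 hx.2).deriv
    have h3 : HasDerivAt g1 ((1 / π) * ∫ θ in (0:ℝ)..π, F2 ζ θ) ζ := h2
    have h4 := h3.congr_of_eventuallyEq heq
    have he : (1 / π) * (∫ θ in (0:ℝ)..π, F2 ζ θ)
        = ((ζ + 1) * (2 * ζ ^ 2 - 1) / (π * ζ ^ 2)) * ellE (2 * Real.sqrt ζ / (1 + ζ))
          - ((ζ - 1) * (2 * ζ ^ 2 + 1) / (π * ζ ^ 2)) * ellK (2 * Real.sqrt ζ / (1 + ζ)) := by
      rw [eval2 hζ hζ1, evalJ1 hζ, evalJ2 hζ]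
      field_simp
      ring
    rwa [he] at h4
end

section
/- There exist constants C > 0 and ζ₁ ≥ 1 such that for every ζ ≥ ζ₁, |L₀(ζ) − (3/2)·ζ| ≤ C/ζ; in particular L₀(ζ) = (3/2)ζ + O(ζ^{−1}) as ζ → ∞. -/
open Real

lemma L0_pointwise_bound (ζ : ℝ) (hζ : 2 ≤ ζ) (θ : ℝ) :
    |Real.sqrt (1 + ζ ^ 2 + 2 * ζ * Real.cos θ) * (1 + ζ * Real.cos θ)
      - ((ζ + Real.cos θ) + (1 - Real.cos θ ^ 2) / (2 * ζ)) * (1 + ζ * Real.cos θ)| ≤ 2 / ζ := by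
  set c := Real.cos θ with hcdef
  have hc1 : -1 ≤ c := Real.neg_one_le_cos θ
  have hc2 : c ≤ 1 := Real.cos_le_one θ
  have hζ0 : (0:ℝ) < ζ := by linarith
  have hA0 : (0:ℝ) ≤ 1 + ζ ^ 2 + 2 * ζ * c := by nlinarith
  set s := Real.sqrt (1 + ζ ^ 2 + 2 * ζ * c) with hsdef
  have hs0 : 0 ≤ s := Real.sqrt_nonneg _
  have hs2 : s ^ 2 = 1 + ζ ^ 2 + 2 * ζ * c := Real.sq_sqrt hA0
  have h1 : ζ - 1 ≤ s := by
    have : ζ - 1 = Real.sqrt ((ζ - 1) ^ 2) := (Real.sqrt_sq (by linarith)).symm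
    rw [this, hsdef]
    exact Real.sqrt_le_sqrt (by nlinarith)
  have h2 : s ≤ ζ + 1 := by
    have : ζ + 1 = Real.sqrt ((ζ + 1) ^ 2) := (Real.sqrt_sq (by linarith)).symm
    rw [this, hsdef]
    exact Real.sqrt_le_sqrt (by nlinarith)
  set u := s - (ζ + c) with hudef
  have hid : u * (s + (ζ + c)) = 1 - c ^ 2 := by
    have h : u * (s + (ζ + c)) = s ^ 2 - (ζ + c) ^ 2 := by rw [hudef]; ring
    rw [h, hs2]; ring
  have hD : ζ ≤ s + (ζ + c) := by linarith
  have hu0 : 0 ≤ u := by nlinarith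
  have huζ : u * ζ ≤ 1 := by nlinarith
  have key : s * (1 + ζ * c) - ((ζ + c) + (1 - c ^ 2) / (2 * ζ)) * (1 + ζ * c)
      = (u * ((ζ - c) - s) * (1 + ζ * c)) / (2 * ζ) := by
    rw [← hid]
    field_simp
    ring
  rw [key, abs_div, abs_of_pos (by linarith : (0:ℝ) < 2 * ζ),
    div_le_div_iff₀ (by linarith) hζ0]
  have e1 : |(ζ - c) - s| ≤ 2 := abs_le.mpr ⟨by linarith, by linarith⟩
  have e2 : |1 + ζ * c| ≤ 1 + ζ := abs_le.mpr ⟨by nlinarith, by nlinarith⟩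
  have hb : |u * ((ζ - c) - s) * (1 + ζ * c)| ≤ 4 := by
    rw [abs_mul, abs_mul, abs_of_nonneg hu0]
    calc u * |(ζ - c) - s| * |1 + ζ * c|
        ≤ u * 2 * (1 + ζ) := by
          apply mul_le_mul (mul_le_mul le_rfl e1 (abs_nonneg _) hu0) e2 (abs_nonneg _)
            (by positivity)
      _ ≤ 4 := by nlinarith [mul_nonneg hu0 (by linarith : (0:ℝ) ≤ ζ - 1)]
  nlinarith [abs_nonneg (u * ((ζ - c) - s) * (1 + ζ * c))]

lemma L0_integral_g (ζ : ℝ) (hζ : 2 ≤ ζ) :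
    ∫ θ in (0:ℝ)..π, ((ζ + Real.cos θ) + (1 - Real.cos θ ^ 2) / (2 * ζ)) * (1 + ζ * Real.cos θ)
      = π * ((3 / 2) * ζ + 1 / (4 * ζ)) := by
  have hζ0 : ζ ≠ 0 := by linarith
  have hderiv : ∀ θ : ℝ, HasDerivAt
      (fun θ : ℝ => (ζ + 1 / (2 * ζ)) * θ + (ζ ^ 2 + 3 / 2) * Real.sin θ
        + (ζ - 1 / (2 * ζ)) * (θ / 2 + Real.sin (2 * θ) / 4)
        - (1 / 2) * (Real.sin θ - Real.sin θ ^ 3 / 3))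
      (((ζ + Real.cos θ) + (1 - Real.cos θ ^ 2) / (2 * ζ)) * (1 + ζ * Real.cos θ)) θ := by
    intro θ
    have h1 : HasDerivAt (fun θ : ℝ => (ζ + 1 / (2 * ζ)) * θ) (ζ + 1 / (2 * ζ)) θ := by
      simpa using (hasDerivAt_id θ).const_mul (ζ + 1 / (2 * ζ))
    have h2 : HasDerivAt (fun θ : ℝ => (ζ ^ 2 + 3 / 2) * Real.sin θ)
        ((ζ ^ 2 + 3 / 2) * Real.cos θ) θ := (Real.hasDerivAt_sin θ).const_mul _
    have h2θ : HasDerivAt (fun θ : ℝ => Real.sin (2 * θ)) (Real.cos (2 * θ) * 2) θ := by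
      have := (Real.hasDerivAt_sin (2 * θ)).comp θ ((hasDerivAt_id θ).const_mul 2)
      simpa [Function.comp_def] using this
    have h3 : HasDerivAt (fun θ : ℝ => (ζ - 1 / (2 * ζ)) * (θ / 2 + Real.sin (2 * θ) / 4))
        ((ζ - 1 / (2 * ζ)) * (1 / 2 + Real.cos (2 * θ) * 2 / 4)) θ := by
      exact (((hasDerivAt_id θ).div_const 2).add (h2θ.div_const 4)).const_mul _
    have hsin3 : HasDerivAt (fun θ : ℝ => Real.sin θ ^ 3)
        ((3 : ℕ) * Real.sin θ ^ 2 * Real.cos θ) θ := by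
      simpa using (Real.hasDerivAt_sin θ).fun_pow 3
    have h4 : HasDerivAt (fun θ : ℝ => (1 / 2) * (Real.sin θ - Real.sin θ ^ 3 / 3))
        ((1 / 2) * (Real.cos θ - (3 : ℕ) * Real.sin θ ^ 2 * Real.cos θ / 3)) θ :=
      ((Real.hasDerivAt_sin θ).sub (hsin3.div_const 3)).const_mul _
    have H := ((h1.add h2).add h3).sub h4
    refine H.congr_deriv ?_
    rw [Real.cos_two_mul, Real.sin_sq]
    push_cast
    field_simp
    ring
  have hcont : Continuous (fun θ : ℝ =>
      ((ζ + Real.cos θ) + (1 - Real.cos θ ^ 2) / (2 * ζ)) * (1 + ζ * Real.cos θ)) := by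
    continuity
  rw [intervalIntegral.integral_eq_sub_of_hasDerivAt (fun θ _ => hderiv θ)
    (hcont.intervalIntegrable 0 π)]
  simp [Real.sin_pi, Real.sin_two_pi]
  field_simp
  ring

theorem stmt_10 :
    ∃ C > (0:ℝ), ∃ ζ₁ : ℝ, 1 ≤ ζ₁ ∧ ∀ ζ : ℝ, ζ₁ ≤ ζ →
      |L0 ζ - (3 / 2) * ζ| ≤ C / ζ := by
  refine ⟨3, by norm_num, 2, by norm_num, fun ζ hζ => ?_⟩
  have hζ0 : (0:ℝ) < ζ := by linarith
  have hπ : (0:ℝ) < π := Real.pi_pos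
  set f : ℝ → ℝ := fun θ =>
    Real.sqrt (1 + ζ ^ 2 + 2 * ζ * Real.cos θ) * (1 + ζ * Real.cos θ) with hfdef
  set g : ℝ → ℝ := fun θ =>
    ((ζ + Real.cos θ) + (1 - Real.cos θ ^ 2) / (2 * ζ)) * (1 + ζ * Real.cos θ) with hgdef
  have hfc : Continuous f := by
    apply Continuous.mul
    · exact Real.continuous_sqrt.comp (by continuity)
    · continuity
  have hgc : Continuous g := by
    apply Continuous.mul
    · continuity
    · continuity
  have hfi : IntervalIntegrable f MeasureTheory.volume 0 π := hfc.intervalIntegrable 0 π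
  have hgi : IntervalIntegrable g MeasureTheory.volume 0 π := hgc.intervalIntegrable 0 π
  set I : ℝ := ∫ θ in (0:ℝ)..π, (f θ - g θ) with hIdef
  have hI : |I| ≤ (2 / ζ) * |π - 0| := by
    have := intervalIntegral.norm_integral_le_of_norm_le_const
      (f := fun θ => f θ - g θ) (C := 2 / ζ) (a := (0:ℝ)) (b := π)
      (fun x _ => by simpa [Real.norm_eq_abs] using L0_pointwise_bound ζ hζ x)
    simpa [Real.norm_eq_abs, hIdef] using this
  have hIg : (∫ θ in (0:ℝ)..π, f θ) = I + ∫ θ in (0:ℝ)..π, g θ := by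
    rw [hIdef, intervalIntegral.integral_sub hfi hgi]; ring
  have hL : L0 ζ = (1 / π) * I + (3 / 2) * ζ + 1 / (4 * ζ) := by
    rw [L0]
    have : (∫ θ in (0:ℝ)..π,
        Real.sqrt (1 + ζ ^ 2 + 2 * ζ * Real.cos θ) * (1 + ζ * Real.cos θ))
        = ∫ θ in (0:ℝ)..π, f θ := by rfl
    rw [this, hIg, L0_integral_g ζ hζ]
    field_simp
    ring
  rw [hL]
  have step1 : |(1 / π) * I + (3 / 2) * ζ + 1 / (4 * ζ) - 3 / 2 * ζ|
      = |(1 / π) * I + 1 / (4 * ζ)| := by ring_nf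
  rw [step1]
  calc |(1 / π) * I + 1 / (4 * ζ)| ≤ |(1 / π) * I| + |1 / (4 * ζ)| := abs_add_le _ _
    _ ≤ (1 / π) * ((2 / ζ) * |π - 0|) + 1 / (4 * ζ) := by
        rw [abs_mul, abs_of_pos (by positivity : (0:ℝ) < 1 / π),
          abs_of_pos (by positivity : (0:ℝ) < 1 / (4 * ζ))]
        have := mul_le_mul_of_nonneg_left hI (le_of_lt (by positivity : (0:ℝ) < 1 / π))
        linarith
    _ = (9 / 4) / ζ := by
        rw [abs_of_pos (by linarith : (0:ℝ) < π - 0)]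
        field_simp
        ring
    _ ≤ 3 / ζ := by gcongr <;> norm_num
end

section
/- There exists a constant C > 0 such that for every ζ > 0, |L₀(ζ)| ≤ C · √(1 + ζ²), i.e. |L₀(ζ)| ≲ ⟨ζ⟩ where ⟨ζ⟩ = (1 + ζ²)^{1/2}. -/
open Real

lemma aux_alg (r p q s : ℝ) (hr0 : 0 < r) (hp0 : 0 ≤ p) (hq0 : 0 ≤ q)
    (hp2 : p ^ 2 = r ^ 2 + 2 * s) (hq2 : q ^ 2 = r ^ 2 - 2 * s)
    (hs2 : s ^ 2 ≤ r ^ 2) :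
    |p * (1 + s) + q * (1 - s)| ≤ 8 * r := by
  have hple : p ≤ 2 * r := by nlinarith
  have hqle : q ≤ 2 * r := by nlinarith
  have hpq : r ≤ p + q := by nlinarith [mul_nonneg hp0 hq0]
  have hid : s * (p - q) * (p + q) = 4 * s ^ 2 := by nlinarith
  have hpq0 : 0 < p + q := lt_of_lt_of_le hr0 hpq
  have ht0 : 0 ≤ s * (p - q) := by
    by_contra h
    push_neg at h
    nlinarith [sq_nonneg s, mul_neg_of_neg_of_pos h hpq0]
  have ht4 : s * (p - q) ≤ 4 * r := by
    have h5 : s * (p - q) * r ≤ 4 * r ^ 2 := by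
      have := mul_le_mul_of_nonneg_left hpq ht0
      nlinarith
    nlinarith
  have hE : p * (1 + s) + q * (1 - s) = (p + q) + s * (p - q) := by ring
  rw [hE, abs_of_nonneg (by nlinarith)]
  nlinarith

lemma key_ineq (ζ c : ℝ) (hζ : 0 < ζ) (hc : |c| ≤ 1) :
    |Real.sqrt (1 + ζ ^ 2 + 2 * ζ * c) * (1 + ζ * c) +
      Real.sqrt (1 + ζ ^ 2 - 2 * ζ * c) * (1 - ζ * c)| ≤ 8 * Real.sqrt (1 + ζ ^ 2) := by
  have hc1 : -1 ≤ c := (abs_le.mp hc).1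
  have hc2 : c ≤ 1 := (abs_le.mp hc).2
  have ha0 : (0:ℝ) < 1 + ζ ^ 2 := by positivity
  have hrad1 : (0:ℝ) ≤ 1 + ζ ^ 2 + 2 * (ζ * c) := by
    nlinarith [sq_nonneg (ζ*(1+c)), sq_nonneg (1 - ζ), sq_nonneg (1 + c)]
  have hrad2 : (0:ℝ) ≤ 1 + ζ ^ 2 - 2 * (ζ * c) := by
    nlinarith [sq_nonneg (ζ*(1-c)), sq_nonneg (1 - ζ), sq_nonneg (1 - c)]
  have hr0 : 0 < Real.sqrt (1 + ζ ^ 2) := Real.sqrt_pos.mpr ha0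
  have hr2 : (Real.sqrt (1 + ζ ^ 2)) ^ 2 = 1 + ζ ^ 2 := Real.sq_sqrt ha0.le
  have hp2 : (Real.sqrt (1 + ζ ^ 2 + 2 * ζ * c)) ^ 2 =
      (Real.sqrt (1 + ζ ^ 2)) ^ 2 + 2 * (ζ * c) := by
    rw [hr2, Real.sq_sqrt (by linarith : (0:ℝ) ≤ 1 + ζ ^ 2 + 2 * ζ * c)]; ring
  have hq2 : (Real.sqrt (1 + ζ ^ 2 - 2 * ζ * c)) ^ 2 =
      (Real.sqrt (1 + ζ ^ 2)) ^ 2 - 2 * (ζ * c) := by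
    rw [hr2, Real.sq_sqrt (by linarith : (0:ℝ) ≤ 1 + ζ ^ 2 - 2 * ζ * c)]; ring
  have hs2 : (ζ * c) ^ 2 ≤ (Real.sqrt (1 + ζ ^ 2)) ^ 2 := by
    rw [hr2]
    nlinarith [mul_le_mul_of_nonneg_left (by nlinarith : c ^ 2 ≤ 1) (sq_nonneg ζ)]
  exact aux_alg (Real.sqrt (1 + ζ ^ 2)) _ _ (ζ * c) hr0 (Real.sqrt_nonneg _)
    (Real.sqrt_nonneg _) hp2 hq2 hs2

theorem stmt_11 :
    ∃ C > (0:ℝ), ∀ ζ : ℝ, 0 < ζ → |L0 ζ| ≤ C * Real.sqrt (1 + ζ ^ 2) := by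
  refine ⟨8, by norm_num, fun ζ hζ => ?_⟩
  set F : ℝ → ℝ := fun θ => Real.sqrt (1 + ζ ^ 2 + 2 * ζ * Real.cos θ) * (1 + ζ * Real.cos θ)
    with hF
  have hcont : Continuous F := by
    apply Continuous.mul
    · exact (continuous_const.add ((continuous_const.mul Real.continuous_cos))).sqrt
    · exact continuous_const.add (continuous_const.mul Real.continuous_cos)
  have hcont2 : Continuous (fun θ : ℝ => F (π - θ)) := hcont.comp (by continuity)
  have h2 : ∫ θ in (0:ℝ)..(π/2), F (π - θ) = ∫ θ in (π - π/2)..(π - 0), F θ :=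
    intervalIntegral.integral_comp_sub_left F π
  have hsplit : ∫ θ in (0:ℝ)..(π/2), (F θ + F (π - θ)) = ∫ θ in (0:ℝ)..π, F θ := by
    calc ∫ θ in (0:ℝ)..(π/2), (F θ + F (π - θ))
        = (∫ θ in (0:ℝ)..(π/2), F θ) + ∫ θ in (0:ℝ)..(π/2), F (π - θ) :=
          intervalIntegral.integral_add (hcont.intervalIntegrable _ _)
            (hcont2.intervalIntegrable _ _)
      _ = (∫ θ in (0:ℝ)..(π/2), F θ) + ∫ θ in (π/2)..π, F θ := by
          rw [h2, sub_zero, show π - π/2 = π/2 from by ring]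
      _ = ∫ θ in (0:ℝ)..π, F θ :=
          intervalIntegral.integral_add_adjacent_intervals
            (hcont.intervalIntegrable 0 (π/2)) (hcont.intervalIntegrable (π/2) π)
  have habs : |π/2 - 0| = π/2 := by
    rw [sub_zero]; exact abs_of_pos (by positivity)
  have hbound : ‖∫ θ in (0:ℝ)..(π/2), (F θ + F (π - θ))‖ ≤
      (8 * Real.sqrt (1 + ζ ^ 2)) * |π/2 - 0| := by
    apply intervalIntegral.norm_integral_le_of_norm_le_const
    intro θ _
    rw [Real.norm_eq_abs]
    have hkey := key_ineq ζ (Real.cos θ) hζ (Real.abs_cos_le_one θ)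
    have heq : F θ + F (π - θ) =
        Real.sqrt (1 + ζ ^ 2 + 2 * ζ * Real.cos θ) * (1 + ζ * Real.cos θ) +
        Real.sqrt (1 + ζ ^ 2 - 2 * ζ * Real.cos θ) * (1 - ζ * Real.cos θ) := by
      simp only [hF, Real.cos_pi_sub]
      ring_nf
    rw [heq]
    exact hkey
  rw [habs, Real.norm_eq_abs] at hbound
  have hπ : (0:ℝ) < π := Real.pi_pos
  rw [L0, abs_mul, abs_of_pos (by positivity : (0:ℝ) < 1/π)]
  rw [← hsplit]
  calc (1/π) * |∫ θ in (0:ℝ)..(π/2), (F θ + F (π - θ))|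
      ≤ (1/π) * ((8 * Real.sqrt (1 + ζ ^ 2)) * (π/2)) :=
        mul_le_mul_of_nonneg_left hbound (by positivity)
    _ ≤ 8 * Real.sqrt (1 + ζ ^ 2) := by
        have h0 : 0 ≤ Real.sqrt (1 + ζ ^ 2) := Real.sqrt_nonneg _
        rw [div_mul_eq_mul_div, one_mul, div_le_iff₀ hπ]
        nlinarith
end

section
/- For every ζ > 0, L₀(ζ) − ζ·L₀(1/ζ) = (4(ζ²−1)/π) · ∫₀^{π/2} cos²θ / (√(1 + ζ² + 2ζ cos θ) + √(1 + ζ² − 2ζ cos θ)) dθ. -/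
open Real

theorem stmt_12 (ζ : ℝ) (hζ : 0 < ζ) :
    L0 ζ - ζ * L0 (1 / ζ)
      = (4 * (ζ ^ 2 - 1) / π) * ∫ θ in (0:ℝ)..(π / 2),
          Real.cos θ ^ 2 / (Real.sqrt (1 + ζ ^ 2 + 2 * ζ * Real.cos θ)
            + Real.sqrt (1 + ζ ^ 2 - 2 * ζ * Real.cos θ)) := by
  have hζ0 : ζ ≠ 0 := hζ.ne'
  have hπ : (0:ℝ) < π := Real.pi_pos
  have hAp : ∀ θ : ℝ, 0 ≤ 1 + ζ ^ 2 + 2 * ζ * Real.cos θ := by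
    intro θ
    nlinarith [Real.neg_one_le_cos θ, Real.cos_le_one θ, sq_nonneg (1 - ζ), sq_nonneg (1 + ζ)]
  have hAm : ∀ θ : ℝ, 0 ≤ 1 + ζ ^ 2 - 2 * ζ * Real.cos θ := by
    intro θ
    nlinarith [Real.neg_one_le_cos θ, Real.cos_le_one θ, sq_nonneg (1 - ζ), sq_nonneg (1 + ζ)]
  -- continuity facts
  have hcp : Continuous fun θ : ℝ => Real.sqrt (1 + ζ ^ 2 + 2 * ζ * Real.cos θ) :=
    Real.continuous_sqrt.comp (by continuity)
  have hcm : Continuous fun θ : ℝ => Real.sqrt (1 + ζ ^ 2 - 2 * ζ * Real.cos θ) :=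
    Real.continuous_sqrt.comp (by continuity)
  have int1 : ∀ a b : ℝ, IntervalIntegrable
      (fun θ => Real.sqrt (1 + ζ ^ 2 + 2 * ζ * Real.cos θ) * (1 + ζ * Real.cos θ))
      MeasureTheory.volume a b := fun a b =>
    (hcp.mul (by continuity)).intervalIntegrable a b
  have int2 : ∀ a b : ℝ, IntervalIntegrable
      (fun θ => Real.sqrt (1 + ζ ^ 2 + 2 * ζ * Real.cos θ) * (ζ + Real.cos θ) / ζ ^ 2)
      MeasureTheory.volume a b := fun a b =>
    ((hcp.mul (by continuity)).div_const _).intervalIntegrable a b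
  have intK : ∀ a b : ℝ, IntervalIntegrable
      (fun θ => Real.sqrt (1 + ζ ^ 2 + 2 * ζ * Real.cos θ) * Real.cos θ)
      MeasureTheory.volume a b := fun a b =>
    (hcp.mul Real.continuous_cos).intervalIntegrable a b
  -- rewrite L0 (1/ζ)
  have hL : L0 (1 / ζ) = (1 / π) * ∫ θ in (0:ℝ)..π,
      Real.sqrt (1 + ζ ^ 2 + 2 * ζ * Real.cos θ) * (ζ + Real.cos θ) / ζ ^ 2 := by
    unfold L0
    congr 1
    apply intervalIntegral.integral_congr
    intro θ _
    dsimp only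
    have h1 : 1 + (1 / ζ) ^ 2 + 2 * (1 / ζ) * Real.cos θ
        = (1 + ζ ^ 2 + 2 * ζ * Real.cos θ) / ζ ^ 2 := by field_simp; ring
    rw [h1, Real.sqrt_div (hAp θ), Real.sqrt_sq hζ.le]
    have h2 : (1 : ℝ) + 1 / ζ * Real.cos θ = (ζ + Real.cos θ) / ζ := by field_simp
    rw [h2, div_mul_div_comm]
    ring
  -- combine the two integrals
  have hI : (∫ θ in (0:ℝ)..π, Real.sqrt (1 + ζ ^ 2 + 2 * ζ * Real.cos θ) * (1 + ζ * Real.cos θ))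
      - ζ * (∫ θ in (0:ℝ)..π, Real.sqrt (1 + ζ ^ 2 + 2 * ζ * Real.cos θ) * (ζ + Real.cos θ) / ζ ^ 2)
      = ((ζ ^ 2 - 1) / ζ) * ∫ θ in (0:ℝ)..π,
          Real.sqrt (1 + ζ ^ 2 + 2 * ζ * Real.cos θ) * Real.cos θ := by
    rw [← intervalIntegral.integral_const_mul ζ, ← intervalIntegral.integral_const_mul,
      ← intervalIntegral.integral_sub (int1 0 π) ((int2 0 π).const_mul ζ)]
    apply intervalIntegral.integral_congr
    intro θ _
    dsimp only
    field_simp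
    ring
  have hdiff : L0 ζ - ζ * L0 (1 / ζ)
      = ((ζ ^ 2 - 1) / (π * ζ)) * ∫ θ in (0:ℝ)..π,
          Real.sqrt (1 + ζ ^ 2 + 2 * ζ * Real.cos θ) * Real.cos θ := by
    rw [hL]
    unfold L0
    rw [show ((1:ℝ)/π) * (∫ θ in (0:ℝ)..π,
          Real.sqrt (1 + ζ ^ 2 + 2 * ζ * Real.cos θ) * (1 + ζ * Real.cos θ)) -
        ζ * ((1/π) * ∫ θ in (0:ℝ)..π,
          Real.sqrt (1 + ζ ^ 2 + 2 * ζ * Real.cos θ) * (ζ + Real.cos θ) / ζ ^ 2)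
        = (1/π) * ((∫ θ in (0:ℝ)..π,
          Real.sqrt (1 + ζ ^ 2 + 2 * ζ * Real.cos θ) * (1 + ζ * Real.cos θ)) -
        ζ * (∫ θ in (0:ℝ)..π,
          Real.sqrt (1 + ζ ^ 2 + 2 * ζ * Real.cos θ) * (ζ + Real.cos θ) / ζ ^ 2)) from by ring,
      hI]
    ring
  -- reflection of the upper half of the K integral
  have hrefl : (∫ θ in (π/2:ℝ)..π, Real.sqrt (1 + ζ ^ 2 + 2 * ζ * Real.cos θ) * Real.cos θ)
      = ∫ θ in (0:ℝ)..(π/2), Real.sqrt (1 + ζ ^ 2 - 2 * ζ * Real.cos θ) * (-Real.cos θ) := by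
    have h := intervalIntegral.integral_comp_sub_left (a := (0:ℝ)) (b := π/2)
      (fun θ => Real.sqrt (1 + ζ ^ 2 + 2 * ζ * Real.cos θ) * Real.cos θ) π
    simp only [Real.cos_pi_sub, mul_neg, sub_zero] at h
    rw [show π - π/2 = π/2 by ring] at h
    rw [← h]
    apply intervalIntegral.integral_congr
    intro θ _
    dsimp only
    ring_nf
  -- split K
  have hK : (∫ θ in (0:ℝ)..π, Real.sqrt (1 + ζ ^ 2 + 2 * ζ * Real.cos θ) * Real.cos θ)
      = ∫ θ in (0:ℝ)..(π/2), (Real.sqrt (1 + ζ ^ 2 + 2 * ζ * Real.cos θ)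
          - Real.sqrt (1 + ζ ^ 2 - 2 * ζ * Real.cos θ)) * Real.cos θ := by
    rw [← intervalIntegral.integral_add_adjacent_intervals (intK 0 (π/2)) (intK (π/2) π), hrefl,
      ← intervalIntegral.integral_add (intK 0 (π/2))
        (show IntervalIntegrable (fun θ => Real.sqrt (1 + ζ ^ 2 - 2 * ζ * Real.cos θ) * -Real.cos θ)
          MeasureTheory.volume 0 (π/2) from
          ((hcm.mul Real.continuous_cos.neg)).intervalIntegrable 0 (π/2))]
    apply intervalIntegral.integral_congr
    intro θ _
    dsimp only
    ring
  -- rationalize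
  have hrat : (∫ θ in (0:ℝ)..(π/2), (Real.sqrt (1 + ζ ^ 2 + 2 * ζ * Real.cos θ)
          - Real.sqrt (1 + ζ ^ 2 - 2 * ζ * Real.cos θ)) * Real.cos θ)
      = 4 * ζ * ∫ θ in (0:ℝ)..(π/2),
          Real.cos θ ^ 2 / (Real.sqrt (1 + ζ ^ 2 + 2 * ζ * Real.cos θ)
            + Real.sqrt (1 + ζ ^ 2 - 2 * ζ * Real.cos θ)) := by
    rw [← intervalIntegral.integral_const_mul]
    apply intervalIntegral.integral_congr
    intro θ _
    dsimp only
    set s := Real.sqrt (1 + ζ ^ 2 + 2 * ζ * Real.cos θ) with hs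
    set t := Real.sqrt (1 + ζ ^ 2 - 2 * ζ * Real.cos θ) with ht
    have hs2 : s ^ 2 = 1 + ζ ^ 2 + 2 * ζ * Real.cos θ := Real.sq_sqrt (hAp θ)
    have ht2 : t ^ 2 = 1 + ζ ^ 2 - 2 * ζ * Real.cos θ := Real.sq_sqrt (hAm θ)
    have hsn : 0 ≤ s := Real.sqrt_nonneg _
    have htn : 0 ≤ t := Real.sqrt_nonneg _
    have hst : 0 < s + t := by nlinarith [mul_nonneg hsn htn]
    field_simp
    linear_combination Real.cos θ * hs2 - Real.cos θ * ht2
  rw [hdiff, hK, hrat]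
  field_simp
  ring
end

section
/- For every ζ > 0, the equality L₀(ζ) = ζ · L₀(1/ζ) holds if and only if ζ = 1. -/
open Real

lemma arg_nonneg (ζ θ : ℝ) (hζ : 0 < ζ) : 0 ≤ 1 + ζ ^ 2 + 2 * ζ * Real.cos θ := by
  have h1 : (0:ℝ) ≤ Real.cos θ + 1 := by linarith [Real.neg_one_le_cos θ]
  nlinarith [mul_nonneg hζ.le h1, sq_nonneg (ζ - 1)]

lemma I_pos (ζ : ℝ) (hζ : 0 < ζ) :
    0 < ∫ θ in (0:ℝ)..π, Real.sqrt (1 + ζ ^ 2 + 2 * ζ * Real.cos θ) * Real.cos θ := by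
  have hπ := Real.pi_pos
  set g : ℝ → ℝ := fun θ => Real.sqrt (1 + ζ ^ 2 + 2 * ζ * Real.cos θ) * Real.cos θ with hg
  have hgc : Continuous g := by fun_prop
  have h1 : ∫ θ in (0:ℝ)..π, g θ =
      (∫ θ in (0:ℝ)..(π/2), g θ) + ∫ θ in (π/2)..π, g θ :=
    (intervalIntegral.integral_add_adjacent_intervals (hgc.intervalIntegrable _ _)
      (hgc.intervalIntegrable _ _)).symm
  have h2 : ∫ θ in (π/2)..π, g θ = ∫ θ in (0:ℝ)..(π/2), g (π - θ) := by
    rw [intervalIntegral.integral_comp_sub_left g π, sub_half, sub_zero]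
  have h3 : (∫ θ in (0:ℝ)..(π/2), g θ) + (∫ θ in (0:ℝ)..(π/2), g (π - θ)) =
      ∫ θ in (0:ℝ)..(π/2), (g θ + g (π - θ)) :=
    (intervalIntegral.integral_add (hgc.intervalIntegrable _ _)
      ((hgc.comp (by fun_prop)).intervalIntegrable _ _)).symm
  rw [h1, h2, h3]
  apply intervalIntegral.intervalIntegral_pos_of_pos_on
  · exact ((hgc.add (hgc.comp (by fun_prop))).intervalIntegrable _ _)
  · intro x hx
    have hc : 0 < Real.cos x :=
      Real.cos_pos_of_mem_Ioo ⟨by linarith [hx.1], hx.2⟩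
    have hcpi : Real.cos (π - x) = -Real.cos x := Real.cos_pi_sub x
    simp only [hg, hcpi]
    have hlt : Real.sqrt (1 + ζ ^ 2 + 2 * ζ * (-Real.cos x)) <
        Real.sqrt (1 + ζ ^ 2 + 2 * ζ * Real.cos x) := by
      apply Real.sqrt_lt_sqrt
      · have := arg_nonneg ζ (π - x) hζ
        rwa [hcpi] at this
      · nlinarith [mul_pos hζ hc]
    nlinarith [mul_pos (sub_pos.mpr hlt) hc]
  · linarith

lemma ptwise (ζ : ℝ) (hζ : 0 < ζ) (θ : ℝ) :
    ζ * (Real.sqrt (1 + (1/ζ) ^ 2 + 2 * (1/ζ) * Real.cos θ) * (1 + (1/ζ) * Real.cos θ)) =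
      Real.sqrt (1 + ζ ^ 2 + 2 * ζ * Real.cos θ) * (1 + ζ * Real.cos θ) -
      (ζ - 1/ζ) * (Real.sqrt (1 + ζ ^ 2 + 2 * ζ * Real.cos θ) * Real.cos θ) := by
  have hζ' : ζ ≠ 0 := hζ.ne'
  have harg : 1 + (1/ζ) ^ 2 + 2 * (1/ζ) * Real.cos θ =
      (1 + ζ ^ 2 + 2 * ζ * Real.cos θ) / ζ ^ 2 := by
    field_simp; ring
  have hs : Real.sqrt (1 + (1/ζ) ^ 2 + 2 * (1/ζ) * Real.cos θ) =
      Real.sqrt (1 + ζ ^ 2 + 2 * ζ * Real.cos θ) / ζ := by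
    rw [harg, Real.sqrt_div (arg_nonneg ζ θ hζ), Real.sqrt_sq hζ.le]
  rw [hs]
  field_simp
  ring

theorem stmt_13 (ζ : ℝ) (hζ : 0 < ζ) :
    L0 ζ = ζ * L0 (1 / ζ) ↔ ζ = 1 := by
  have hπ : 0 < π := Real.pi_pos
  have hI := I_pos ζ hζ
  set I := ∫ θ in (0:ℝ)..π, Real.sqrt (1 + ζ ^ 2 + 2 * ζ * Real.cos θ) * Real.cos θ with hIdef
  have key : L0 ζ - ζ * L0 (1/ζ) = (1/π) * ((ζ - 1/ζ) * I) := by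
    unfold L0
    have e1 : ζ * ((1 / π) * ∫ θ in (0:ℝ)..π,
        Real.sqrt (1 + (1/ζ) ^ 2 + 2 * (1/ζ) * Real.cos θ) * (1 + (1/ζ) * Real.cos θ)) =
        (1 / π) * ∫ θ in (0:ℝ)..π,
        ζ * (Real.sqrt (1 + (1/ζ) ^ 2 + 2 * (1/ζ) * Real.cos θ) * (1 + (1/ζ) * Real.cos θ)) := by
      rw [intervalIntegral.integral_const_mul]; ring
    rw [e1]
    have e2 : ∫ θ in (0:ℝ)..π,
        ζ * (Real.sqrt (1 + (1/ζ) ^ 2 + 2 * (1/ζ) * Real.cos θ) * (1 + (1/ζ) * Real.cos θ)) =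
        (∫ θ in (0:ℝ)..π, Real.sqrt (1 + ζ ^ 2 + 2 * ζ * Real.cos θ) * (1 + ζ * Real.cos θ)) -
        (ζ - 1/ζ) * I := by
      have hcong : ∀ θ ∈ Set.uIcc (0:ℝ) π,
          ζ * (Real.sqrt (1 + (1/ζ) ^ 2 + 2 * (1/ζ) * Real.cos θ) * (1 + (1/ζ) * Real.cos θ)) =
          Real.sqrt (1 + ζ ^ 2 + 2 * ζ * Real.cos θ) * (1 + ζ * Real.cos θ) -
          (ζ - 1/ζ) * (Real.sqrt (1 + ζ ^ 2 + 2 * ζ * Real.cos θ) * Real.cos θ) :=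
        fun θ _ => ptwise ζ hζ θ
      rw [intervalIntegral.integral_congr hcong,
        intervalIntegral.integral_sub
          (by apply Continuous.intervalIntegrable; fun_prop)
          (by apply Continuous.intervalIntegrable; fun_prop),
        intervalIntegral.integral_const_mul]
    rw [e2]
    ring
  constructor
  · intro h
    have h0 : (1/π) * ((ζ - 1/ζ) * I) = 0 := by rw [← key]; linarith
    have h1 : (ζ - 1/ζ) * I = 0 := by
      rcases mul_eq_zero.mp h0 with h' | h'
      · exact absurd h' (by positivity)
      · exact h'
    have h2 : ζ - 1/ζ = 0 := by
      rcases mul_eq_zero.mp h1 with h' | h'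
      · exact h'
      · exact absurd h' hI.ne'
    have h3 : ζ * ζ = 1 := by
      field_simp at h2
      nlinarith [h2]
    nlinarith
  · intro h
    subst h
    norm_num at key
    linarith
end

section
/- For every ζ > 0, ∫₀^π |1 + ζ cos θ| / (1 + ζ² + 2ζ cos θ) dθ ≤ 2π/(1 + ζ). -/
open Real

lemma denomPos {r : ℝ} (hr0 : 0 ≤ r) (hr1 : r < 1) (t : ℝ) :
    0 < 1 + r ^ 2 + 2 * r * Real.cos t := by
  nlinarith [Real.neg_one_le_cos t, Real.cos_le_one t]

lemma hasDerivAt_core {r : ℝ} (hr0 : 0 ≤ r) (hr1 : r < 1) (t : ℝ) :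
    HasDerivAt (fun θ => Real.arctan (r * Real.sin θ / (1 + r * Real.cos θ)))
      (r * (r + Real.cos t) / (1 + r ^ 2 + 2 * r * Real.cos t)) t := by
  have hden : 0 < 1 + r * Real.cos t := by nlinarith [Real.neg_one_le_cos t]
  have hD := denomPos hr0 hr1 t
  have h1 : HasDerivAt (fun θ => r * Real.sin θ) (r * Real.cos t) t :=
    (Real.hasDerivAt_sin t).const_mul r
  have h2 : HasDerivAt (fun θ => 1 + r * Real.cos θ) (r * (-Real.sin t)) t :=
    ((Real.hasDerivAt_cos t).const_mul r).const_add 1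
  have h3 := h1.div h2 hden.ne'
  have h4 := (Real.hasDerivAt_arctan (r * Real.sin t / (1 + r * Real.cos t))).comp t h3
  refine h4.congr_deriv ?_
  have hs := Real.sin_sq_add_cos_sq t
  have hpos : (0:ℝ) < 1 + (r * Real.sin t / (1 + r * Real.cos t)) ^ 2 := by positivity
  field_simp
  rw [eq_div_iff (by linarith)]
  linear_combination ((1 + r * Real.cos t) ^ 2 * r ^ 2 *
    (r * (r + Real.cos t) - (1 + r ^ 2 + 2 * r * Real.cos t)) + (2 * r ^ 2 + 4 * r ^ 3 * Real.cos t
      + 3 * r ^ 4 * Real.cos t ^ 2 + r ^ 5 * Real.cos t ^ 3)) * hs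

lemma stmt16_lt (ζ : ℝ) (hζ : 0 < ζ) (hζ1 : ζ < 1) :
    (∫ θ in (0:ℝ)..π, |1 + ζ * Real.cos θ| / (1 + ζ ^ 2 + 2 * ζ * Real.cos θ))
      ≤ 2 * π / (1 + ζ) := by
    have hD : ∀ t : ℝ, 0 < 1 + ζ ^ 2 + 2 * ζ * Real.cos t := denomPos hζ.le hζ1
    have key : ∀ t ∈ Set.uIcc (0:ℝ) π,
        HasDerivAt (fun θ => θ - Real.arctan (ζ * Real.sin θ / (1 + ζ * Real.cos θ)))
          ((1 + ζ * Real.cos t) / (1 + ζ ^ 2 + 2 * ζ * Real.cos t)) t := by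
      intro t _
      have h := (hasDerivAt_id t).sub (hasDerivAt_core hζ.le hζ1 t)
      refine h.congr_deriv ?_
      have hne := (hD t).ne'
      rw [eq_div_iff hne, sub_mul, div_mul_cancel₀ _ hne]
      ring
    have hcont : Continuous (fun t => (1 + ζ * Real.cos t) / (1 + ζ ^ 2 + 2 * ζ * Real.cos t)) := by
      exact (continuous_const.add (continuous_const.mul Real.continuous_cos)).div
        (by continuity) (fun t => (hD t).ne')
    have hftc := intervalIntegral.integral_eq_sub_of_hasDerivAt key
      (hcont.intervalIntegrable 0 π)
    have hcongr : (∫ θ in (0:ℝ)..π, |1 + ζ * Real.cos θ| / (1 + ζ ^ 2 + 2 * ζ * Real.cos θ))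
        = ∫ θ in (0:ℝ)..π, (1 + ζ * Real.cos θ) / (1 + ζ ^ 2 + 2 * ζ * Real.cos θ) := by
      apply intervalIntegral.integral_congr
      intro t _
      have : 0 ≤ 1 + ζ * Real.cos t := by nlinarith [Real.neg_one_le_cos t]
      simp [abs_of_nonneg this]
    rw [hcongr, hftc]
    simp only [Real.sin_pi, Real.sin_zero, mul_zero, zero_mul, zero_div, Real.arctan_zero,
      sub_zero, zero_sub, neg_zero]
    rw [le_div_iff₀ (by positivity)]
    nlinarith [Real.pi_pos]

lemma stmt16_eq :
    (∫ θ in (0:ℝ)..π, |1 + 1 * Real.cos θ| / (1 + 1 ^ 2 + 2 * 1 * Real.cos θ))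
      ≤ 2 * π / (1 + 1) := by
    have hcongr : (∫ θ in (0:ℝ)..π, |1 + 1 * Real.cos θ| / (1 + 1 ^ 2 + 2 * 1 * Real.cos θ))
        = ∫ θ in (0:ℝ)..π, (1/2 : ℝ) := by
      apply intervalIntegral.integral_congr_ae
      have hne : ∀ᵐ x : ℝ, x ≠ π := by
        refine (MeasureTheory.ae_iff).2 ?_
        have h : {x : ℝ | ¬x ≠ π} = {π} := by ext x; simp
        rw [h]
        exact MeasureTheory.measure_singleton π
      filter_upwards [hne] with x hx hmem
      rw [Set.uIoc_of_le Real.pi_pos.le] at hmem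
      have hxπ : x < π := lt_of_le_of_ne hmem.2 hx
      have hcos : -1 < Real.cos x := by
        have := Real.cos_lt_cos_of_nonneg_of_le_pi hmem.1.le le_rfl hxπ
        simpa using this
      have h0 : 0 < 1 + Real.cos x := by linarith
      rw [one_mul, abs_of_pos h0, show (1:ℝ) + 1 ^ 2 + 2 * 1 * Real.cos x
        = 2 * (1 + Real.cos x) by ring]
      rw [div_eq_div_iff (by positivity) (by norm_num)]
      ring
    rw [hcongr]
    simp only [intervalIntegral.integral_const, smul_eq_mul, sub_zero]
    have h2 : 2 * π / (1 + 1) = π := by ring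
    rw [h2]
    nlinarith [Real.pi_pos]

lemma stmt16_gt (ζ : ℝ) (hζ : 0 < ζ) (hζ1 : 1 < ζ) :
    (∫ θ in (0:ℝ)..π, |1 + ζ * Real.cos θ| / (1 + ζ ^ 2 + 2 * ζ * Real.cos θ))
      ≤ 2 * π / (1 + ζ) := by
    have hη0 : 0 < ζ⁻¹ := by positivity
    have hz : ζ⁻¹ * ζ = 1 := inv_mul_cancel₀ hζ.ne'
    have hη1 : ζ⁻¹ < 1 := by nlinarith
    set θ₀ := Real.arccos (-ζ⁻¹) with hθ₀def
    have hcosθ₀ : Real.cos θ₀ = -ζ⁻¹ := Real.cos_arccos (by linarith) (by linarith)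
    have hθ₀0 : 0 ≤ θ₀ := Real.arccos_nonneg _
    have hθ₀π : θ₀ ≤ π := Real.arccos_le_pi _
    have hD : ∀ t : ℝ, 0 < 1 + ζ ^ 2 + 2 * ζ * Real.cos t := by
      intro t; nlinarith [Real.neg_one_le_cos t, Real.cos_le_one t]
    have hDη : ∀ t : ℝ, 0 < 1 + ζ⁻¹ ^ 2 + 2 * ζ⁻¹ * Real.cos t := denomPos hη0.le hη1
    have hcont : Continuous (fun θ => |1 + ζ * Real.cos θ| / (1 + ζ ^ 2 + 2 * ζ * Real.cos θ)) := by
      exact ((continuous_const.add (continuous_const.mul Real.continuous_cos)).abs).div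
        (by continuity) (fun t => (hD t).ne')
    have hgcont : Continuous (fun t => ζ⁻¹ * (ζ⁻¹ + Real.cos t) / (1 + ζ⁻¹ ^ 2 + 2 * ζ⁻¹ * Real.cos t)) := by
      exact (continuous_const.mul (continuous_const.add Real.continuous_cos)).div
        (by continuity) (fun t => (hDη t).ne')
    have hsplit : (∫ θ in (0:ℝ)..π, |1 + ζ * Real.cos θ| / (1 + ζ ^ 2 + 2 * ζ * Real.cos θ))
        = (∫ θ in (0:ℝ)..θ₀, |1 + ζ * Real.cos θ| / (1 + ζ ^ 2 + 2 * ζ * Real.cos θ))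
          + ∫ θ in θ₀..π, |1 + ζ * Real.cos θ| / (1 + ζ ^ 2 + 2 * ζ * Real.cos θ) :=
      (intervalIntegral.integral_add_adjacent_intervals
        (hcont.intervalIntegrable 0 θ₀) (hcont.intervalIntegrable θ₀ π)).symm
    have habs : ∀ t : ℝ, 0 ≤ 1 + ζ * Real.cos t →
        |1 + ζ * Real.cos t| / (1 + ζ ^ 2 + 2 * ζ * Real.cos t)
          = ζ⁻¹ * (ζ⁻¹ + Real.cos t) / (1 + ζ⁻¹ ^ 2 + 2 * ζ⁻¹ * Real.cos t) := by
      intro t ht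
      rw [abs_of_nonneg ht, div_eq_div_iff (hD t).ne' (hDη t).ne']
      have hne := hζ.ne'
      field_simp
      ring
    have habs' : ∀ t : ℝ, 1 + ζ * Real.cos t ≤ 0 →
        |1 + ζ * Real.cos t| / (1 + ζ ^ 2 + 2 * ζ * Real.cos t)
          = -(ζ⁻¹ * (ζ⁻¹ + Real.cos t) / (1 + ζ⁻¹ ^ 2 + 2 * ζ⁻¹ * Real.cos t)) := by
      intro t ht
      rw [abs_of_nonpos ht, neg_div, neg_inj, div_eq_div_iff (hD t).ne' (hDη t).ne']
      have hne := hζ.ne'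
      field_simp
      ring
    have key : ∀ t : ℝ, HasDerivAt
        (fun θ => Real.arctan (ζ⁻¹ * Real.sin θ / (1 + ζ⁻¹ * Real.cos θ)))
        (ζ⁻¹ * (ζ⁻¹ + Real.cos t) / (1 + ζ⁻¹ ^ 2 + 2 * ζ⁻¹ * Real.cos t)) t :=
      fun t => hasDerivAt_core hη0.le hη1 t
    have hF0 : Real.arctan (ζ⁻¹ * Real.sin 0 / (1 + ζ⁻¹ * Real.cos 0)) = 0 := by simp
    have hFπ : Real.arctan (ζ⁻¹ * Real.sin π / (1 + ζ⁻¹ * Real.cos π)) = 0 := by simp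
    have hI1 : (∫ θ in (0:ℝ)..θ₀, |1 + ζ * Real.cos θ| / (1 + ζ ^ 2 + 2 * ζ * Real.cos θ))
        = Real.arctan (ζ⁻¹ * Real.sin θ₀ / (1 + ζ⁻¹ * Real.cos θ₀)) := by
      rw [intervalIntegral.integral_congr (g := fun t =>
          ζ⁻¹ * (ζ⁻¹ + Real.cos t) / (1 + ζ⁻¹ ^ 2 + 2 * ζ⁻¹ * Real.cos t)) ?_,
        intervalIntegral.integral_eq_sub_of_hasDerivAt (fun t _ => key t)
          (hgcont.intervalIntegrable _ _), hF0, sub_zero]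
      intro t htm
      rw [Set.uIcc_of_le hθ₀0] at htm
      apply habs
      have h1 : Real.cos θ₀ ≤ Real.cos t :=
        Real.cos_le_cos_of_nonneg_of_le_pi htm.1 hθ₀π htm.2
      rw [hcosθ₀] at h1
      nlinarith
    have hI2 : (∫ θ in θ₀..π, |1 + ζ * Real.cos θ| / (1 + ζ ^ 2 + 2 * ζ * Real.cos θ))
        = Real.arctan (ζ⁻¹ * Real.sin θ₀ / (1 + ζ⁻¹ * Real.cos θ₀)) := by
      rw [intervalIntegral.integral_congr (g := fun t =>
          -(ζ⁻¹ * (ζ⁻¹ + Real.cos t) / (1 + ζ⁻¹ ^ 2 + 2 * ζ⁻¹ * Real.cos t))) ?_,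
        intervalIntegral.integral_neg,
        intervalIntegral.integral_eq_sub_of_hasDerivAt (fun t _ => key t)
          (hgcont.intervalIntegrable _ _), hFπ, zero_sub, neg_neg]
      intro t htm
      rw [Set.uIcc_of_le hθ₀π] at htm
      apply habs'
      have h1 : Real.cos t ≤ Real.cos θ₀ :=
        Real.cos_le_cos_of_nonneg_of_le_pi hθ₀0 htm.2 htm.1
      rw [hcosθ₀] at h1
      nlinarith
    have hsinθ₀ : Real.sin θ₀ = Real.sqrt (1 - ζ⁻¹ ^ 2) := by
      rw [hθ₀def, Real.sin_arccos]
      norm_num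
    have hsq : Real.sqrt (1 - ζ⁻¹ ^ 2) ^ 2 = 1 - ζ⁻¹ ^ 2 := by
      rw [Real.sq_sqrt]; nlinarith
    have hsqpos : 0 < Real.sqrt (1 - ζ⁻¹ ^ 2) := by
      apply Real.sqrt_pos.2; nlinarith
    have hval : Real.arctan (ζ⁻¹ * Real.sin θ₀ / (1 + ζ⁻¹ * Real.cos θ₀))
        = Real.arcsin ζ⁻¹ := by
      rw [hsinθ₀, hcosθ₀, Real.arcsin_eq_arctan ⟨by linarith, hη1⟩]
      congr 1
      rw [div_eq_div_iff (by nlinarith : (0:ℝ) < 1 + ζ⁻¹ * -ζ⁻¹).ne' hsqpos.ne']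
      linear_combination ζ⁻¹ * hsq
    rw [hsplit, hI1, hI2, hval]
    have ha0 : 0 ≤ Real.arcsin ζ⁻¹ := Real.arcsin_nonneg.2 hη0.le
    have ha2 : Real.arcsin ζ⁻¹ ≤ π / 2 := Real.arcsin_le_pi_div_two _
    have hsin : Real.sin (Real.arcsin ζ⁻¹) = ζ⁻¹ := Real.sin_arcsin (by linarith) hη1.le
    have hjordan := Real.mul_le_sin ha0 ha2
    rw [hsin] at hjordan
    have harc : Real.arcsin ζ⁻¹ ≤ π / 2 * ζ⁻¹ := by
      have h := mul_le_mul_of_nonneg_left hjordan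
        (le_of_lt (by positivity : (0:ℝ) < π / 2))
      calc Real.arcsin ζ⁻¹ = π / 2 * (2 / π * Real.arcsin ζ⁻¹) := by
            field_simp
        _ ≤ π / 2 * ζ⁻¹ := h
    have hfinal : π * ζ⁻¹ * (1 + ζ) ≤ 2 * π := by
      have e : π * ζ⁻¹ * (1 + ζ) = π * ζ⁻¹ + π := by linear_combination π * hz
      have e2 : π * ζ⁻¹ ≤ π * 1 := mul_le_mul_of_nonneg_left hη1.le Real.pi_pos.le
      linarith
    have hsum : Real.arcsin ζ⁻¹ + Real.arcsin ζ⁻¹ ≤ π * ζ⁻¹ := by linarith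
    rw [le_div_iff₀ (by positivity : (0:ℝ) < 1 + ζ)]
    calc (Real.arcsin ζ⁻¹ + Real.arcsin ζ⁻¹) * (1 + ζ) ≤ π * ζ⁻¹ * (1 + ζ) :=
          mul_le_mul_of_nonneg_right hsum (by linarith)
      _ ≤ 2 * π := hfinal

theorem stmt_16 (ζ : ℝ) (hζ : 0 < ζ) :
    (∫ θ in (0:ℝ)..π, |1 + ζ * Real.cos θ| / (1 + ζ ^ 2 + 2 * ζ * Real.cos θ))
      ≤ 2 * π / (1 + ζ) := by
  rcases lt_trichotomy ζ 1 with hζ1 | hζ1 | hζ1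
  · exact stmt16_lt ζ hζ hζ1
  · subst hζ1; exact stmt16_eq
  · exact stmt16_gt ζ hζ hζ1
end
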